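/- arXiv:2005.06688 — 4 statements merged into one kernel-verified Lean document; each statement's English description precedes it below -/
import Mathlib

section
/- Given a valid independence relation I on an LTS, any interleaving (topological linearization) of the partial-order run obtained from a run σ by removing order between independent actions is itself a run of the LTS and reaches the same set of states as σ. -/
/-- A labeled transition system with an initial state. -/
structure LTS (S A : Type*) where
  tr : S → A → S → Prop
  init : S

namespace LTS

variable {S A : Type*} (M : LTS S A)

/-- An action is enabled at a state if some transition fires it. -/
def Enabled (a : A) (s : S) : Prop := ∃ s', M.tr s a s'

/-- One symbolic step on a set of states. -/
def stepSet (X : Set S) (a : A) : Set S := {s' | ∃ s ∈ X, M.tr s a s'}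

/-- `statesFrom s σ` is the set of states reachable from `s` executing `σ`. -/
def statesFrom (s : S) (σ : List A) : Set S := σ.foldl M.stepSet {s}

/-- A state is reachable if some word reaches it from the initial state. -/
def Reachable (s : S) : Prop := ∃ σ : List A, s ∈ M.statesFrom M.init σ

end LTS

/-- Swapping two adjacent independent actions. -/
def SwapAdj {A : Type*} (I : A → A → Prop) (x y : List A) : Prop :=
  ∃ (u v : List A) (a b : A), I a b ∧ x = u ++ a :: b :: v ∧ y = u ++ b :: a :: v

/-- Mazurkiewicz trace equivalence. -/
def TraceEquiv {A : Type*} (I : A → A → Prop) : List A → List A → Prop :=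
  Relation.EqvGen (SwapAdj I)

/-- Validity of an independence relation: at every reachable state, firing one
action of an independent pair preserves enabledness of the other, and firing
both in either order reaches the same set of states. -/
def ValidIndependence {S A : Type*} (M : LTS S A) (I : A → A → Prop) : Prop :=
  ∀ s, M.Reachable s → ∀ a b, I a b →
    ((∀ s', M.tr s a s' → (M.Enabled b s ↔ M.Enabled b s')) ∧
     (M.Enabled a s → M.Enabled b s →
        M.statesFrom s [a, b] = M.statesFrom s [b, a]))

/-- The happens-before order of the partial-order run of `σ`: position `i`
precedes position `j` iff they are ordered by the transitive closure of
"earlier and dependent". -/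
def PORun {S A : Type*} (_M : LTS S A) (I : A → A → Prop) (σ : List A) :
    Fin σ.length → Fin σ.length → Prop :=
  Relation.TransGen (fun i j => (i : ℕ) < (j : ℕ) ∧ ¬ I (σ.get i) (σ.get j))

/-- `τ` is an interleaving (topological linearization) of the partial-order run
of `σ`: the label sequence of some order-respecting permutation of positions. -/
def IsInterleaving {S A : Type*} (M : LTS S A) (I : A → A → Prop)
    (σ τ : List A) : Prop :=
  ∃ f : Fin σ.length ≃ Fin σ.length,
    (∀ i j, PORun M I σ i j → (f i : ℕ) < (f j : ℕ)) ∧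
    τ = List.ofFn (fun k => σ.get (f.symm k))


section Aux
variable {S A : Type*}

lemma mem_statesFrom_two (M : LTS S A) (s : S) (a b : A) (t : S) :
    t ∈ M.statesFrom s [a, b] ↔ ∃ s', M.tr s a s' ∧ M.tr s' b t := by
  simp [LTS.statesFrom, LTS.stepSet]

lemma statesFrom_pair_comm (M : LTS S A) {I : A → A → Prop}
    (hsymm : ∀ a b, I a b → I b a) (hvalid : ValidIndependence M I)
    {s : S} (hs : M.Reachable s) {a b : A} (hI : I a b) :
    M.statesFrom s [a, b] = M.statesFrom s [b, a] := by
  by_cases ha : M.Enabled a s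
  · by_cases hb : M.Enabled b s
    · exact (hvalid s hs a b hI).2 ha hb
    · ext t
      simp only [mem_statesFrom_two]
      constructor
      · rintro ⟨s', h1, h2⟩
        exact absurd (((hvalid s hs a b hI).1 s' h1).mpr ⟨t, h2⟩) hb
      · rintro ⟨s', h1, _⟩
        exact absurd ⟨s', h1⟩ hb
  · ext t
    simp only [mem_statesFrom_two]
    constructor
    · rintro ⟨s', h1, _⟩
      exact absurd ⟨s', h1⟩ ha
    · rintro ⟨s', h1, h2⟩
      exact absurd (((hvalid s hs b a (hsymm a b hI)).1 s' h1).mpr ⟨t, h2⟩) ha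

lemma stepSet_comm (M : LTS S A) {I : A → A → Prop}
    (hsymm : ∀ a b, I a b → I b a) (hvalid : ValidIndependence M I)
    {X : Set S} (hX : ∀ s ∈ X, M.Reachable s) {a b : A} (hI : I a b) :
    M.stepSet (M.stepSet X a) b = M.stepSet (M.stepSet X b) a := by
  ext t
  constructor
  · rintro ⟨s', ⟨s, hsX, h1⟩, h2⟩
    have : t ∈ M.statesFrom s [b, a] := by
      rw [← statesFrom_pair_comm M hsymm hvalid (hX s hsX) hI]
      exact (mem_statesFrom_two M s a b t).mpr ⟨s', h1, h2⟩
    obtain ⟨s'', h1', h2'⟩ := (mem_statesFrom_two M s b a t).mp this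
    exact ⟨s'', ⟨s, hsX, h1'⟩, h2'⟩
  · rintro ⟨s', ⟨s, hsX, h1⟩, h2⟩
    have : t ∈ M.statesFrom s [a, b] := by
      rw [statesFrom_pair_comm M hsymm hvalid (hX s hsX) hI]
      exact (mem_statesFrom_two M s b a t).mpr ⟨s', h1, h2⟩
    obtain ⟨s'', h1', h2'⟩ := (mem_statesFrom_two M s a b t).mp this
    exact ⟨s'', ⟨s, hsX, h1'⟩, h2'⟩

lemma swap_statesFrom (M : LTS S A) {I : A → A → Prop}
    (hsymm : ∀ a b, I a b → I b a) (hvalid : ValidIndependence M I)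
    {u v : List A} {a b : A} (hI : I a b) :
    M.statesFrom M.init (u ++ a :: b :: v) = M.statesFrom M.init (u ++ b :: a :: v) := by
  unfold LTS.statesFrom
  rw [List.foldl_append, List.foldl_append, List.foldl_cons, List.foldl_cons,
    List.foldl_cons, List.foldl_cons]
  congr 1
  exact stepSet_comm M hsymm hvalid (fun s hs => ⟨u, hs⟩) hI

lemma traceEquiv_statesFrom (M : LTS S A) {I : A → A → Prop}
    (hsymm : ∀ a b, I a b → I b a) (hvalid : ValidIndependence M I)
    {x y : List A} (h : TraceEquiv I x y) :
    M.statesFrom M.init x = M.statesFrom M.init y := by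
  induction h with
  | rel x y hxy =>
    obtain ⟨u, v, a, b, hI, rfl, rfl⟩ := hxy
    exact swap_statesFrom M hsymm hvalid hI
  | refl => rfl
  | symm _ _ _ ih => exact ih.symm
  | trans _ _ _ _ _ ih1 ih2 => exact ih1.trans ih2

lemma traceEquiv_cons {I : A → A → Prop} (a : A) {x y : List A}
    (h : TraceEquiv I x y) : TraceEquiv I (a :: x) (a :: y) := by
  induction h with
  | rel x y hxy =>
    obtain ⟨u, v, c, d, hI, rfl, rfl⟩ := hxy
    exact Relation.EqvGen.rel _ _ ⟨a :: u, v, c, d, hI, rfl, rfl⟩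
  | refl x => exact Relation.EqvGen.refl _
  | symm _ _ _ ih => exact Relation.EqvGen.symm _ _ ih
  | trans _ _ _ _ _ ih1 ih2 => exact Relation.EqvGen.trans _ _ _ ih1 ih2

lemma traceEquiv_bubble {I : A → A → Prop} (a : A) :
    ∀ (u v : List A), (∀ b ∈ u, I b a) →
      TraceEquiv I (u ++ a :: v) (a :: (u ++ v)) := by
  intro u
  induction u with
  | nil => intro v _; exact Relation.EqvGen.refl _
  | cons c u ih =>
    intro v h
    have h1 : TraceEquiv I (c :: (u ++ a :: v)) (c :: a :: (u ++ v)) :=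
      traceEquiv_cons c (ih v (fun b hb => h b (List.mem_cons_of_mem c hb)))
    have h2 : SwapAdj I (c :: a :: (u ++ v)) (a :: c :: (u ++ v)) :=
      ⟨[], u ++ v, c, a, h c (List.mem_cons_self (a := c) (l := u)), rfl, rfl⟩
    exact Relation.EqvGen.trans _ _ _ h1 (Relation.EqvGen.rel _ _ h2)

end Aux

lemma interleave_key {A : Type*} (I : A → A → Prop) :
    ∀ (n : ℕ) (g : Fin n → A) (f : Fin n ≃ Fin n),
      (∀ i j, Relation.TransGen
          (fun i j : Fin n => (i : ℕ) < (j : ℕ) ∧ ¬ I (g i) (g j)) i j →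
          (f i : ℕ) < (f j : ℕ)) →
      TraceEquiv I (List.ofFn g) (List.ofFn (fun k => g (f.symm k))) := by
  intro n
  induction n with
  | zero => intro g f _; exact Relation.EqvGen.refl _
  | succ m ih =>
    intro g f hf
    set p : Fin (m + 1) := f.symm 0 with hp
    have hfp : f p = 0 := f.apply_symm_apply 0
    have hstep : ∀ i : Fin (m + 1), (i : ℕ) < (p : ℕ) → I (g i) (g p) := by
      intro i hi
      by_contra h
      have h2 := hf i p (Relation.TransGen.single ⟨hi, h⟩)
      rw [hfp] at h2
      simp at h2
    set g' : Fin m → A := fun i => g (p.succAbove i) with hg'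
    have hne0 : ∀ i : Fin m, f (p.succAbove i) ≠ 0 := by
      intro i h
      exact Fin.succAbove_ne p i (f.injective (h.trans hfp.symm))
    set φ : Fin m → Fin m := fun i => (f (p.succAbove i)).pred (hne0 i) with hφ
    have hφsucc : ∀ i, (φ i).succ = f (p.succAbove i) := fun i => Fin.succ_pred _ _
    have hφinj : Function.Injective φ := by
      intro i j h
      have h2 : f (p.succAbove i) = f (p.succAbove j) := by
        rw [← hφsucc, ← hφsucc, h]
      exact Fin.succAbove_right_injective (f.injective h2)
    set f' : Fin m ≃ Fin m :=
      Equiv.ofBijective φ (Finite.injective_iff_bijective.mp hφinj) with hf'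
    have hf'app : ∀ i, f' i = φ i := fun _ => rfl
    have hf'ord : ∀ i j, Relation.TransGen
        (fun i j : Fin m => (i : ℕ) < (j : ℕ) ∧ ¬ I (g' i) (g' j)) i j →
        (f' i : ℕ) < (f' j : ℕ) := by
      intro i j h
      have hlift : Relation.TransGen
          (fun i j : Fin (m + 1) => (i : ℕ) < (j : ℕ) ∧ ¬ I (g i) (g j))
          (p.succAbove i) (p.succAbove j) := by
        refine Relation.TransGen.lift p.succAbove ?_ i j h
        rintro a b ⟨hab, hI⟩
        refine ⟨?_, hI⟩
        have h3 : p.succAbove a < p.succAbove b :=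
          Fin.succAbove_lt_succAbove_iff.mpr (Fin.lt_def.mpr hab)
        exact Fin.lt_def.mp h3
      have h4 : f (p.succAbove i) < f (p.succAbove j) := Fin.lt_def.mpr (hf _ _ hlift)
      have h5 : φ i < φ j := (Fin.pred_lt_pred_iff).mpr h4
      rw [hf'app, hf'app]
      exact Fin.lt_def.mp h5
    set l : List A := List.ofFn g with hl
    have hlen : l.length = m + 1 := by simp [hl]
    have hpl : (p : ℕ) < l.length := by rw [hlen]; exact p.isLt
    have hgetp : l[(p : ℕ)]'hpl = g p := by
      simp only [hl, List.getElem_ofFn, Fin.eta]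
    have hB : List.ofFn g' = l.eraseIdx (p : ℕ) := by
      apply List.ext_getElem
      · simp [hl, List.length_eraseIdx, hlen]; omega
      · intro j h1 h2
        rw [List.getElem_ofFn, List.getElem_eraseIdx]
        have hjm : j < m := by simpa using h1
        split
        · next hjp =>
          have : p.succAbove ⟨j, hjm⟩ = ⟨j, by omega⟩ := by
            rw [Fin.succAbove_of_castSucc_lt]
            · rfl
            · exact Fin.lt_def.mpr (by simpa using hjp)
          simp only [hg']
          rw [this]
          simp only [hl, List.getElem_ofFn]
        · next hjp =>
          have : p.succAbove ⟨j, hjm⟩ = ⟨j + 1, by omega⟩ := by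
            rw [Fin.succAbove_of_le_castSucc]
            · rfl
            · exact Fin.le_def.mpr (by simpa using hjp)
          simp only [hg']
          rw [this]
          simp only [hl, List.getElem_ofFn]
    have hsplit : l = l.take (p : ℕ) ++ g p :: l.drop ((p : ℕ) + 1) := by
      conv_lhs => rw [← List.take_append_drop (p : ℕ) l]
      rw [List.drop_eq_getElem_cons hpl]
      simp only [hgetp]
    have hcond : ∀ b ∈ l.take (p : ℕ), I b (g p) := by
      intro b hb
      obtain ⟨j, hj, hbj⟩ := List.mem_iff_getElem.mp hb
      have hjp : j < (p : ℕ) := by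
        simp [List.length_take, hlen] at hj
        omega
      have hjm : j < m + 1 := by omega
      have : b = g ⟨j, hjm⟩ := by
        rw [← hbj, List.getElem_take]
        simp only [hl, List.getElem_ofFn]
      rw [this]
      exact hstep ⟨j, hjm⟩ hjp
    have hA : TraceEquiv I l (g p :: List.ofFn g') := by
      have h6 := traceEquiv_bubble (I := I) (g p) (l.take (p : ℕ)) (l.drop ((p : ℕ) + 1)) hcond
      rw [← hsplit] at h6
      rw [hB, List.eraseIdx_eq_take_drop_succ]
      exact h6
    have hC : List.ofFn (fun k => g (f.symm k)) =
        g p :: List.ofFn (fun k => g' (f'.symm k)) := by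
      rw [List.ofFn_succ]
      refine congrArg₂ List.cons rfl ?_
      refine congrArg List.ofFn (funext fun k => ?_)
      have h7 : f (p.succAbove (f'.symm k)) = k.succ := by
        rw [← hφsucc]
        have : φ (f'.symm k) = k := f'.apply_symm_apply k
        rw [this]
      have h8 : f.symm k.succ = p.succAbove (f'.symm k) :=
        (Equiv.symm_apply_eq f).mpr h7.symm
      rw [h8]
    rw [hC]
    exact Relation.EqvGen.trans _ _ _ hA (traceEquiv_cons (g p) (ih g' f' hf'ord))

/-- given a valid independence relation, any interleaving of the
partial-order run of a run `σ` is itself a run and reaches the same set of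
states as `σ`. -/
theorem interleaving_is_run_same_states {S A : Type*} (M : LTS S A)
    (I : A → A → Prop)
    (hsymm : ∀ a b, I a b → I b a) (hirrefl : ∀ a, ¬ I a a)
    (hvalid : ValidIndependence M I)
    (σ τ : List A)
    (hrun : (M.statesFrom M.init σ).Nonempty)
    (hτ : IsInterleaving M I σ τ) :
    (M.statesFrom M.init τ).Nonempty ∧
      M.statesFrom M.init τ = M.statesFrom M.init σ := by
  obtain ⟨f, hf, hτeq⟩ := hτ
  have hστ : TraceEquiv I σ τ := by
    have hkey := interleave_key I σ.length σ.get f hf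
    rw [List.ofFn_get] at hkey
    rw [hτeq]
    exact hkey
  have heq := traceEquiv_statesFrom M hsymm hvalid hστ
  exact ⟨heq ▸ hrun, heq.symm⟩
end

section
/- Let C be a finite configuration of the unfolding of a program under a valid independence relation, and let a be an action enabled at state(C). Then there exists exactly one event e ∈ en(C) with h(e) = a. -/
/-- Causal closedness. -/
def CClosed {E : Type*} (lt : E → E → Prop) (C : Set E) : Prop :=
  ∀ e ∈ C, ∀ e', lt e' e → e' ∈ C

/-- Conflict-freeness. -/
def CFree {E : Type*} (confl : E → E → Prop) (C : Set E) : Prop :=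
  ∀ e ∈ C, ∀ e' ∈ C, ¬ confl e e'

/-- A configuration: finite, causally closed, conflict-free. -/
def Cfg {E : Type*} (lt confl : E → E → Prop) (C : Set E) : Prop :=
  C.Finite ∧ CClosed lt C ∧ CFree confl C

/-- The unfolding of a program under a valid independence relation, presented
abstractly: a prime event structure with labels in `A`, an independence
relation, a state function `st` on configurations and an enabledness predicate,
satisfying the closure properties of the inductive unfolding construction. -/
structure UnfSys (E A S : Type*) where
  lt : E → E → Prop
  confl : E → E → Prop
  lbl : E → A
  indep : A → A → Prop
  st : Set E → Set S
  en : A → Set S → Prop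
  lt_trans : ∀ {a b c : E}, lt a b → lt b c → lt a c
  lt_irrefl : ∀ a : E, ¬ lt a a
  confl_symm : ∀ {a b : E}, confl a b → confl b a
  confl_irrefl : ∀ a : E, ¬ confl a a
  indep_symm : ∀ a b, indep a b → indep b a
  indep_irrefl : ∀ a, ¬ indep a a
  causes_fin : ∀ e : E, {x | lt x e}.Finite
  causes_cfg : ∀ e : E, Cfg lt confl {x | lt x e}
  /-- Events of the unfolding are identified by their action and causal history. -/
  event_ext : ∀ e e' : E, lbl e = lbl e' → {x | lt x e} = {x | lt x e'} → e = e'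
  /-- Conflict is as in the unfolding: distinct, causally unrelated, dependent. -/
  confl_def : ∀ e e' : E, confl e e' ↔
    (e ≠ e' ∧ ¬ lt e e' ∧ ¬ lt e' e ∧ ¬ indep (lbl e) (lbl e'))
  /-- Unfolding fixpoint rule: any action enabled at the state of a configuration
  and dependent on all its maximal events gives rise to an event. -/
  create : ∀ (C : Set E) (a : A), Cfg lt confl C → en a (st C) →
    (∀ e' ∈ C, (∀ e'' ∈ C, ¬ lt e' e'') → ¬ indep a (lbl e')) →
    ∃ e : E, lbl e = a ∧ {x | lt x e} = C
  /-- Every event's label is dependent on the labels of the maximal events of its history. -/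
  hist_dep : ∀ e : E, ∀ e', lt e' e →
    (∀ e'', lt e' e'' → ¬ lt e'' e) → ¬ indep (lbl e) (lbl e')
  /-- Validity of the independence: an action independent of a maximal event of a
  configuration remains enabled after removing that event. -/
  drop_indep : ∀ (C : Set E) (a : A) (e' : E), Cfg lt confl C → e' ∈ C →
    (∀ e'' ∈ C, ¬ lt e' e'') → indep a (lbl e') → en a (st C) →
    en a (st (C \ {e'}))

section helpers
variable {E A S : Type*}

lemma exists_max_of_finite (lt : E → E → Prop)
    (htr : ∀ {a b c : E}, lt a b → lt b c → lt a c) (hirr : ∀ a : E, ¬ lt a a)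
    {T : Set E} (hfin : T.Finite) :
    T.Nonempty → ∃ x ∈ T, ∀ y ∈ T, ¬ lt x y := by
  refine Set.Finite.induction_on
    (motive := fun T _ => T.Nonempty → ∃ x ∈ T, ∀ y ∈ T, ¬ lt x y) T hfin ?_ ?_
  · rintro ⟨x, hx⟩; exact absurd hx (Set.notMem_empty x)
  · intro a s has hs ih _
    rcases s.eq_empty_or_nonempty with rfl | hne
    · exact ⟨a, Set.mem_insert _ _, by
        rintro y (rfl | hy)
        · exact hirr y
        · exact absurd hy (Set.notMem_empty y)⟩
    · obtain ⟨m, hm, hmax⟩ := ih hne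
      by_cases hma : lt m a
      · refine ⟨a, Set.mem_insert _ _, ?_⟩
        rintro y (rfl | hy)
        · exact hirr y
        · exact fun h => hmax y hy (htr hma h)
      · refine ⟨m, Set.mem_insert_of_mem _ hm, ?_⟩
        rintro y (rfl | hy)
        · exact hma
        · exact hmax y hy

lemma strip_indep (U : UnfSys E A S) (a : A) :
    ∀ n (C : Set E), Cfg U.lt U.confl C → C.ncard ≤ n → U.en a (U.st C) →
      ∃ D, D ⊆ C ∧ Cfg U.lt U.confl D ∧ U.en a (U.st D) ∧
        (∀ e' ∈ D, (∀ e'' ∈ D, ¬ U.lt e' e'') → ¬ U.indep a (U.lbl e')) ∧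
        (∀ x ∈ C, x ∉ D → U.indep a (U.lbl x)) := by
  intro n
  induction n with
  | zero =>
    intro C hC hcard ha
    have : C = ∅ := by
      have := Set.ncard_eq_zero hC.1 |>.mp (Nat.le_zero.mp hcard)
      exact this
    subst this
    exact ⟨∅, subset_rfl, hC, ha, fun e' h => absurd h (Set.notMem_empty e'),
      fun x h => absurd h (Set.notMem_empty x)⟩
  | succ n ih =>
    intro C hC hcard ha
    by_cases hall : ∀ e' ∈ C, (∀ e'' ∈ C, ¬ U.lt e' e'') → ¬ U.indep a (U.lbl e')
    · exact ⟨C, subset_rfl, hC, ha, hall, fun x hx hx' => absurd hx hx'⟩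
    · push_neg at hall
      obtain ⟨e', he'C, hmax, hind⟩ := hall
      set C' := C \ {e'} with hC'
      have hC'cfg : Cfg U.lt U.confl C' := by
        refine ⟨hC.1.subset Set.diff_subset, ?_, ?_⟩
        · intro x hx y hyx
          have hxC : x ∈ C := hx.1
          have hyC : y ∈ C := hC.2.1 x hxC y hyx
          refine ⟨hyC, ?_⟩
          rintro rfl
          exact hmax x hxC hyx
        · intro x hx y hy
          exact hC.2.2 x hx.1 y hy.1
      have hen' : U.en a (U.st C') := U.drop_indep C a e' hC he'C hmax hind ha
      have hcard' : C'.ncard ≤ n := by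
        have hlt : C'.ncard < C.ncard := Set.ncard_diff_singleton_lt_of_mem he'C hC.1
        omega
      obtain ⟨D, hDsub, hDcfg, hDen, hDdep, hDind⟩ := ih C' hC'cfg hcard' hen'
      refine ⟨D, hDsub.trans Set.diff_subset, hDcfg, hDen, hDdep, ?_⟩
      intro x hxC hxD
      by_cases hx : x = e'
      · subst hx; exact hind
      · exact hDind x ⟨hxC, hx⟩ hxD

end helpers

/-- if `C` is a finite configuration of the unfolding and `a` is
an action enabled at `state(C)`, then there is exactly one event `e ∈ en(C)`
with label `a`. -/
theorem exists_unique_enabled_event {E A S : Type*} (U : UnfSys E A S)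
    (C : Set E) (a : A) (hC : Cfg U.lt U.confl C) (ha : U.en a (U.st C)) :
    ∃! e : E,
      (e ∉ C ∧ {x | U.lt x e} ⊆ C ∧ Cfg U.lt U.confl (C ∪ {e})) ∧
        U.lbl e = a := by
  classical
  obtain ⟨D, hDsub, hDcfg, hDen, hDdep, hDind⟩ :=
    strip_indep U a C.ncard C hC le_rfl ha
  obtain ⟨e, hlbl, hcauses⟩ := U.create D a hDcfg hDen hDdep
  have heC : e ∉ C := by
    intro heC
    have heD : e ∈ D := by
      by_contra h
      exact U.indep_irrefl a (hlbl ▸ hDind e heC h)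
    rw [← hcauses] at heD
    exact U.lt_irrefl e heD
  have hcsub : {x | U.lt x e} ⊆ C := hcauses ▸ hDsub
  have hnc : ∀ x ∈ C, ¬ U.confl e x := by
    intro x hx hcon
    rw [U.confl_def] at hcon
    obtain ⟨hne, h1, h2, h3⟩ := hcon
    have hxD : x ∉ D := fun h => h2 (by rw [← hcauses] at h; exact h)
    exact h3 (hlbl ▸ hDind x hx hxD)
  have hcfg : Cfg U.lt U.confl (C ∪ {e}) := by
    refine ⟨hC.1.union (Set.finite_singleton e), ?_, ?_⟩
    · rintro x (hx | rfl) y hyx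
      · exact Or.inl (hC.2.1 x hx y hyx)
      · exact Or.inl (hcsub hyx)
    · rintro x (hx | rfl) y (hy | rfl)
      · exact hC.2.2 x hx y hy
      · exact fun h => hnc x hx (U.confl_symm h)
      · exact hnc y hy
      · exact U.confl_irrefl _
  have key : ∀ f g : E,
      ((f ∉ C ∧ {x | U.lt x f} ⊆ C ∧ Cfg U.lt U.confl (C ∪ {f})) ∧ U.lbl f = a) →
      ((g ∉ C ∧ {x | U.lt x g} ⊆ C ∧ Cfg U.lt U.confl (C ∪ {g})) ∧ U.lbl g = a) →
      {x | U.lt x f} ⊆ {x | U.lt x g} := by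
    rintro f g ⟨⟨hfC, hfsub, hfcfg⟩, hfl⟩ ⟨⟨hgC, hgsub, hgcfg⟩, hgl⟩
    by_contra hsub
    rw [Set.not_subset] at hsub
    obtain ⟨x0, hx0f, hx0g⟩ := hsub
    have hSfin : ({x | U.lt x f} \ {x | U.lt x g}).Finite :=
      (U.causes_fin f).subset Set.diff_subset
    obtain ⟨x, hxS, hxmax⟩ := exists_max_of_finite U.lt
      (fun h1 h2 => U.lt_trans h1 h2) U.lt_irrefl hSfin ⟨x0, hx0f, hx0g⟩
    have hxmaxf : ∀ y, U.lt x y → ¬ U.lt y f := by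
      intro y hxy hyf
      by_cases hyg : U.lt y g
      · exact hxS.2 ((U.causes_cfg g).2.1 y hyg x hxy)
      · exact hxmax y ⟨hyf, hyg⟩ hxy
    have hdep : ¬ U.indep (U.lbl f) (U.lbl x) := U.hist_dep f x hxS.1 hxmaxf
    have hxC : x ∈ C := hfsub hxS.1
    have hncgx : ¬ U.confl g x := hgcfg.2.2 g (Or.inr rfl) x (Or.inl hxC)
    rw [U.confl_def] at hncgx
    push_neg at hncgx
    have hne : g ≠ x := fun h => hgC (h ▸ hxC)
    have h1 : ¬ U.lt g x := fun h => hgC (hC.2.1 x hxC g h)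
    have h2 : ¬ U.lt x g := hxS.2
    exact hdep (by rw [hfl, ← hgl]; exact hncgx hne h1 h2)
  refine ⟨e, ⟨⟨heC, hcsub, hcfg⟩, hlbl⟩, ?_⟩
  intro f hf
  exact U.event_ext f e (hf.2.trans hlbl.symm)
    (Set.Subset.antisymm (key f e hf ⟨⟨heC, hcsub, hcfg⟩, hlbl⟩)
      (key e f ⟨⟨heC, hcsub, hcfg⟩, hlbl⟩ hf))
end

section
/- In the POSIX-threading semantics, a release action (i, ⟨rel, l⟩) and a signal action (j, ⟨sig, c, k⟩) on distinct threads i ≠ j commute at every state: each rule only modifies disjoint components of the state (lock map u vs. condition-variable map v) plus the program counter of its own thread, so firing them in either order reaches the same state and neither affects the other's enabledness. -/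
/-- A state of the POSIX-threading LTS semantics: program counters, memory,
lock ownership (`0` = free) and condition-variable wait sets (positive ids are
waiting threads, negated ids are already-notified threads). -/
structure PState (L Mem Lock CV : Type*) where
  p : ℕ → L
  m : Mem
  u : Lock → ℕ
  v : CV → Set ℤ

/-- The release rule REL: thread `i` at location `n`, holding lock `l`
(`u l = i`), frees it (`u l := 0`) and advances its program counter. -/
def RelStep {L Mem Lock CV : Type*} [DecidableEq Lock] (i : ℕ) (l : Lock)
    (n n' : L) (s s' : PState L Mem Lock CV) : Prop :=
  s.p i = n ∧ s.u l = i ∧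
    s' = { s with p := Function.update s.p i n', u := Function.update s.u l 0 }

/-- The signal rule SIG: thread `j` at location `n` signals condition variable
`c`. If `k = 0` the signal is lost (no positive id waits on `c` and `v` is
unchanged); if `k > 0` then `k ∈ v c` is woken up, i.e. replaced by `-k`. In
both cases the program counter of `j` advances. -/
def SigStep {L Mem Lock CV : Type*} [DecidableEq CV] (j k : ℕ) (c : CV)
    (n n' : L) (s s' : PState L Mem Lock CV) : Prop :=
  s.p j = n ∧
    ((k = 0 ∧ (∀ z ∈ s.v c, ¬ (0 : ℤ) < z) ∧
        s' = { s with p := Function.update s.p j n' }) ∨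
     (0 < k ∧ (k : ℤ) ∈ s.v c ∧
        s' = { s with p := Function.update s.p j n',
                      v := Function.update s.v c
                        ((s.v c \ {(k : ℤ)}) ∪ {-(k : ℤ)}) }))


private lemma PState.ext' {L Mem Lock CV : Type*} {s t : PState L Mem Lock CV}
    (hp : s.p = t.p) (hm : s.m = t.m) (hu : s.u = t.u) (hv : s.v = t.v) :
    s = t := by
  cases s; cases t; simp_all

/-- a release action of thread `i` and a signal action of a
distinct thread `j` commute at every state: neither affects the other's
enabledness, and firing them in either order reaches the same states. -/
theorem rel_sig_commute {L Mem Lock CV : Type*}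
    [DecidableEq Lock] [DecidableEq CV]
    (i j k : ℕ) (l : Lock) (c : CV) (n₁ n₁' n₂ n₂' : L)
    (hij : i ≠ j) (s : PState L Mem Lock CV) :
    (∀ s', RelStep i l n₁ n₁' s s' →
        ((∃ t, SigStep j k c n₂ n₂' s t) ↔ (∃ t, SigStep j k c n₂ n₂' s' t))) ∧
    (∀ s', SigStep j k c n₂ n₂' s s' →
        ((∃ t, RelStep i l n₁ n₁' s t) ↔ (∃ t, RelStep i l n₁ n₁' s' t))) ∧
    ((∃ t, RelStep i l n₁ n₁' s t) → (∃ t, SigStep j k c n₂ n₂' s t) →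
      {s'' | ∃ t, RelStep i l n₁ n₁' s t ∧ SigStep j k c n₂ n₂' t s''} =
        {s'' | ∃ t, SigStep j k c n₂ n₂' s t ∧ RelStep i l n₁ n₁' t s''}) := by
  have hji : j ≠ i := hij.symm
  refine ⟨?_, ?_, ?_⟩
  · rintro s' ⟨hp, hu, rfl⟩
    constructor
    · rintro ⟨t, hq, h⟩
      rcases h with ⟨hk, hv, rfl⟩ | ⟨hk, hv, rfl⟩
      · exact ⟨_, by simpa [Function.update_of_ne hji] using hq,
          Or.inl ⟨hk, hv, rfl⟩⟩
      · exact ⟨_, by simpa [Function.update_of_ne hji] using hq,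
          Or.inr ⟨hk, hv, rfl⟩⟩
    · rintro ⟨t, hq, h⟩
      simp only [Function.update_of_ne hji] at hq
      rcases h with ⟨hk, hv, rfl⟩ | ⟨hk, hv, rfl⟩
      · exact ⟨_, hq, Or.inl ⟨hk, hv, rfl⟩⟩
      · exact ⟨_, hq, Or.inr ⟨hk, hv, rfl⟩⟩
  · rintro s' ⟨hp, h⟩
    rcases h with ⟨hk, hv, rfl⟩ | ⟨hk, hv, rfl⟩ <;>
    · constructor
      · rintro ⟨t, hq, hu, rfl⟩
        exact ⟨_, by simpa [Function.update_of_ne hij] using hq, hu, rfl⟩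
      · rintro ⟨t, hq, hu, rfl⟩
        simp only [Function.update_of_ne hij] at hq
        exact ⟨_, hq, hu, rfl⟩
  · rintro - -
    ext s''
    simp only [Set.mem_setOf_eq]
    constructor
    · rintro ⟨t, ⟨hp, hu, rfl⟩, hq, h⟩
      simp only [Function.update_of_ne hji] at hq
      rcases h with ⟨hk, hv, rfl⟩ | ⟨hk, hv, rfl⟩
      · refine ⟨_, ⟨hq, Or.inl ⟨hk, hv, rfl⟩⟩,
          by simpa [Function.update_of_ne hij] using hp, hu, ?_⟩
        exact PState.ext' (by rw [Function.update_comm hij]) rfl rfl rfl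
      · refine ⟨_, ⟨hq, Or.inr ⟨hk, hv, rfl⟩⟩,
          by simpa [Function.update_of_ne hij] using hp, hu, ?_⟩
        exact PState.ext' (by rw [Function.update_comm hij]) rfl rfl rfl
    · rintro ⟨t, ⟨hq, h⟩, hp, hu, rfl⟩
      rcases h with ⟨hk, hv, rfl⟩ | ⟨hk, hv, rfl⟩
      · simp only [Function.update_of_ne hij] at hp
        refine ⟨_, ⟨hp, hu, rfl⟩, by simpa [Function.update_of_ne hji] using hq,
          Or.inl ⟨hk, hv, ?_⟩⟩
        exact PState.ext' (by rw [Function.update_comm hji]) rfl rfl rfl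
      · simp only [Function.update_of_ne hij] at hp
        refine ⟨_, ⟨hp, hu, rfl⟩, by simpa [Function.update_of_ne hji] using hq,
          Or.inr ⟨hk, hv, ?_⟩⟩
        exact PState.ext' (by rw [Function.update_comm hji]) rfl rfl rfl
end

section
/- Define the dependence relation on POSIX actions as in the paper (two actions are dependent if they belong to the same thread, or both operate on the same lock, or are a matched wait/notify pair on the same condition variable, etc.), and independence as its complement. Then for a data-race-free program, independence is a valid independence relation: it is symmetric, irreflexive, and every independent pair of actions commutes at every reachable state. -/
/-! STATEMENT 17: validity of the POSIX independence relation for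
data-race-free programs. We formalize the programs, the LTS semantics (rules
LOC, ACQ, REL, W1, W2, SIG, SIG-LOST, BRO), the dependence table of the paper,
independence as its complement, reachability, commuting of actions, and
data-race-freedom. -/

/-- Operations of thread statements. -/
inductive Op (Lock CV : Type*) where
  | loc
  | lock (l : Lock)
  | unlock (l : Lock)
  | wait (c : CV) (l : Lock)
  | signal (c : CV)
  | bcast (c : CV)

/-- A thread statement: thread id, source/destination locations, operation and
memory relation. -/
structure Stmt (L Mem Lock CV : Type*) where
  tid : ℕ
  src : L
  dst : L
  op : Op Lock CV
  rel : Set (Mem × Mem)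

/-- Effects of actions. -/
inductive Eff (L Mem Lock CV : Type*) where
  | loc (t : Stmt L Mem Lock CV)
  | acq (l : Lock)
  | rel (l : Lock)
  | w1 (c : CV) (l : Lock)
  | w2 (c : CV) (l : Lock)
  | sig (c : CV) (k : ℕ)
  | bro (c : CV) (W : Set ℕ)

/-- An action is a thread identifier together with an effect. -/
abbrev Act (L Mem Lock CV : Type*) := ℕ × Eff L Mem Lock CV

/-- A concurrent program. -/
structure Prog (L Mem Lock CV : Type*) where
  T : Set (Stmt L Mem Lock CV)
  m0 : Mem
  p0 : ℕ → L

variable {L Mem Lock CV : Type*}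

/-- The transition relation of the LTS semantics `M_P`. -/
inductive Step [DecidableEq Lock] [DecidableEq CV] (P : Prog L Mem Lock CV) :
    PState L Mem Lock CV → Act L Mem Lock CV → PState L Mem Lock CV → Prop where
  | loc (t : Stmt L Mem Lock CV) (s : PState L Mem Lock CV) (m' : Mem) :
      t ∈ P.T → t.op = Op.loc → s.p t.tid = t.src → (s.m, m') ∈ t.rel →
      Step P s (t.tid, Eff.loc t)
        { s with p := Function.update s.p t.tid t.dst, m := m' }
  | acq (t : Stmt L Mem Lock CV) (s : PState L Mem Lock CV) (l : Lock) :
      t ∈ P.T → t.op = Op.lock l → s.p t.tid = t.src → s.u l = 0 →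
      Step P s (t.tid, Eff.acq l)
        { s with p := Function.update s.p t.tid t.dst,
                 u := Function.update s.u l t.tid }
  | rel (t : Stmt L Mem Lock CV) (s : PState L Mem Lock CV) (l : Lock) :
      t ∈ P.T → t.op = Op.unlock l → s.p t.tid = t.src → s.u l = t.tid →
      Step P s (t.tid, Eff.rel l)
        { s with p := Function.update s.p t.tid t.dst,
                 u := Function.update s.u l 0 }
  | w1 (t : Stmt L Mem Lock CV) (s : PState L Mem Lock CV) (c : CV) (l : Lock) :
      t ∈ P.T → t.op = Op.wait c l → s.p t.tid = t.src → s.u l = t.tid →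
      Step P s (t.tid, Eff.w1 c l)
        { s with u := Function.update s.u l 0,
                 v := Function.update s.v c (s.v c ∪ {(t.tid : ℤ)}) }
  | w2 (t : Stmt L Mem Lock CV) (s : PState L Mem Lock CV) (c : CV) (l : Lock) :
      t ∈ P.T → t.op = Op.wait c l → s.p t.tid = t.src → s.u l = 0 →
      -(t.tid : ℤ) ∈ s.v c →
      Step P s (t.tid, Eff.w2 c l)
        { s with p := Function.update s.p t.tid t.dst,
                 u := Function.update s.u l t.tid,
                 v := Function.update s.v c (s.v c \ {-(t.tid : ℤ)}) }
  | sig (t : Stmt L Mem Lock CV) (s : PState L Mem Lock CV) (c : CV) (j : ℕ) :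
      t ∈ P.T → t.op = Op.signal c → s.p t.tid = t.src → 0 < j →
      (j : ℤ) ∈ s.v c →
      Step P s (t.tid, Eff.sig c j)
        { s with p := Function.update s.p t.tid t.dst,
                 v := Function.update s.v c ((s.v c \ {(j : ℤ)}) ∪ {-(j : ℤ)}) }
  | sigLost (t : Stmt L Mem Lock CV) (s : PState L Mem Lock CV) (c : CV) :
      t ∈ P.T → t.op = Op.signal c → s.p t.tid = t.src →
      (∀ z ∈ s.v c, ¬ (0 : ℤ) < z) →
      Step P s (t.tid, Eff.sig c 0)
        { s with p := Function.update s.p t.tid t.dst }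
  | bro (t : Stmt L Mem Lock CV) (s : PState L Mem Lock CV) (c : CV) :
      t ∈ P.T → t.op = Op.bcast c → s.p t.tid = t.src →
      Step P s (t.tid, Eff.bro c {j : ℕ | 0 < j ∧ (j : ℤ) ∈ s.v c})
        { s with p := Function.update s.p t.tid t.dst,
                 v := Function.update s.v c
                   ((s.v c \ {z | 0 < z}) ∪ {z | -z ∈ s.v c ∧ 0 < -z}) }

section
variable [DecidableEq Lock] [DecidableEq CV]

/-- Enabledness of an action at a state. -/
def Enabled (P : Prog L Mem Lock CV) (a : Act L Mem Lock CV)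
    (s : PState L Mem Lock CV) : Prop :=
  ∃ s', Step P s a s'

/-- The initial state of `M_P`. -/
def initState (P : Prog L Mem Lock CV) : PState L Mem Lock CV :=
  ⟨P.p0, P.m0, fun _ => 0, fun _ => ∅⟩

/-- Reachability in `M_P`. -/
def Reachable (P : Prog L Mem Lock CV) (s : PState L Mem Lock CV) : Prop :=
  Relation.ReflTransGen (fun x y => ∃ a, Step P x a y) (initState P) s

/-- `a` commutes with `a'` at state `s`: firing `a` preserves enabledness of
`a'`, and if both are enabled then both firing orders reach the same states. -/
def CommuteAt (P : Prog L Mem Lock CV) (a a' : Act L Mem Lock CV)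
    (s : PState L Mem Lock CV) : Prop :=
  (∀ s', Step P s a s' → (Enabled P a' s ↔ Enabled P a' s')) ∧
  (Enabled P a s → Enabled P a' s →
    {s'' | ∃ t, Step P s a t ∧ Step P t a' s''} =
      {s'' | ∃ t, Step P s a' t ∧ Step P t a s''})

end

/-- `e'` operates on lock `l`. -/
def TouchesLock (l : Lock) : Eff L Mem Lock CV → Prop
  | Eff.acq l' => l' = l
  | Eff.rel l' => l' = l
  | Eff.w1 _ l' => l' = l
  | Eff.w2 _ l' => l' = l
  | _ => False

/-- One half of the dependence table of the paper (for actions of distinct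
threads); the full dependence relation is its symmetric closure together with
same-thread dependence. -/
def Dep0 : Act L Mem Lock CV → Act L Mem Lock CV → Prop
  | (_, Eff.loc _), _ => False
  | (_, Eff.acq l), (_, e') => TouchesLock l e'
  | (_, Eff.rel l), (_, e') => TouchesLock l e'
  | (i, Eff.w1 c l), (_, e') =>
      TouchesLock l e' ∨ e' = Eff.sig c 0 ∨ e' = Eff.sig c i ∨
        ∃ W, e' = Eff.bro c W
  | (i, Eff.w2 c l), (_, e') =>
      TouchesLock l e' ∨ e' = Eff.sig c i ∨ ∃ W, i ∈ W ∧ e' = Eff.bro c W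
  | (_, Eff.sig c 0), (_, e') =>
      (∃ l, e' = Eff.w1 c l) ∨ (∃ k', k' ≠ 0 ∧ e' = Eff.sig c k') ∨
        (∃ W, W ≠ (∅ : Set ℕ) ∧ e' = Eff.bro c W)
  | (_, Eff.sig c (k + 1)), (j, e') =>
      (∃ l, j = k + 1 ∧ (e' = Eff.w1 c l ∨ e' = Eff.w2 c l)) ∨
        e' = Eff.sig c 0 ∨ e' = Eff.sig c (k + 1) ∨ ∃ W, e' = Eff.bro c W
  | (_, Eff.bro c W), (j, e') =>
      (W = ∅ ∧
        ((∃ l, e' = Eff.w1 c l) ∨ (∃ k', k' ≠ 0 ∧ e' = Eff.sig c k') ∨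
          (∃ W', W' ≠ (∅ : Set ℕ) ∧ e' = Eff.bro c W'))) ∨
      (W ≠ ∅ ∧
        ((∃ l, e' = Eff.w1 c l) ∨ (∃ l, j ∈ W ∧ e' = Eff.w2 c l) ∨
          (∃ k', e' = Eff.sig c k') ∨ ∃ W', e' = Eff.bro c W'))

/-- The dependence relation of the paper: same-thread pairs together with the
symmetric closure of the table. -/
def Dep (a b : Act L Mem Lock CV) : Prop :=
  a.1 = b.1 ∨ Dep0 a b ∨ Dep0 b a

/-- Independence is the complement of dependence. -/
def Indep (a b : Act L Mem Lock CV) : Prop := ¬ Dep a b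

/-- A program is data-race-free if any two local actions of distinct threads
commute at every reachable state. -/
def DataRaceFree [DecidableEq Lock] [DecidableEq CV]
    (P : Prog L Mem Lock CV) : Prop :=
  ∀ t t' : Stmt L Mem Lock CV, t ∈ P.T → t' ∈ P.T → t.tid ≠ t'.tid →
    ∀ s, Reachable P s →
      CommuteAt P (t.tid, Eff.loc t) (t'.tid, Eff.loc t') s


/-! ### Auxiliary machinery: abstract atoms -/

structure Atom (L Mem Lock CV : Type*) where
  tid : ℕ
  src : L
  pnew : Option L
  mrel : Option (Set (Mem × Mem))
  lk : Option (Lock × ℕ × ℕ)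
  cv : Option (CV × (Set ℤ → Prop) × (Set ℤ → Set ℤ))

def Atom.guard (A : Atom L Mem Lock CV) (s : PState L Mem Lock CV) : Prop :=
  s.p A.tid = A.src ∧
  (∀ x, A.lk = some x → s.u x.1 = x.2.1) ∧
  (∀ x, A.cv = some x → x.2.1 (s.v x.1))

def atomsOf (P : Prog L Mem Lock CV) : Act L Mem Lock CV → Set (Atom L Mem Lock CV)
  | (i, Eff.loc t) => {A | i = t.tid ∧ t ∈ P.T ∧ t.op = Op.loc ∧
      A = ⟨t.tid, t.src, some t.dst, some t.rel, none, none⟩}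
  | (i, Eff.acq l) => {A | ∃ t ∈ P.T, t.tid = i ∧ t.op = Op.lock l ∧
      A = ⟨i, t.src, some t.dst, none, some (l, 0, i), none⟩}
  | (i, Eff.rel l) => {A | ∃ t ∈ P.T, t.tid = i ∧ t.op = Op.unlock l ∧
      A = ⟨i, t.src, some t.dst, none, some (l, i, 0), none⟩}
  | (i, Eff.w1 c l) => {A | ∃ t ∈ P.T, t.tid = i ∧ t.op = Op.wait c l ∧
      A = ⟨i, t.src, none, none, some (l, i, 0),
        some (c, fun _ => True, fun V => V ∪ {(i : ℤ)})⟩}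
  | (i, Eff.w2 c l) => {A | ∃ t ∈ P.T, t.tid = i ∧ t.op = Op.wait c l ∧
      A = ⟨i, t.src, some t.dst, none, some (l, 0, i),
        some (c, fun V => -(i : ℤ) ∈ V, fun V => V \ {-(i : ℤ)})⟩}
  | (i, Eff.sig c 0) => {A | ∃ t ∈ P.T, t.tid = i ∧ t.op = Op.signal c ∧
      A = ⟨i, t.src, some t.dst, none, none,
        some (c, fun V => ∀ z ∈ V, ¬ (0 : ℤ) < z, id)⟩}
  | (i, Eff.sig c (k+1)) => {A | ∃ t ∈ P.T, t.tid = i ∧ t.op = Op.signal c ∧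
      A = ⟨i, t.src, some t.dst, none, none,
        some (c, fun V => ((k+1 : ℕ) : ℤ) ∈ V,
          fun V => (V \ {((k+1 : ℕ) : ℤ)}) ∪ {-((k+1 : ℕ) : ℤ)})⟩}
  | (i, Eff.bro c W) => {A | ∃ t ∈ P.T, t.tid = i ∧ t.op = Op.bcast c ∧
      A = ⟨i, t.src, some t.dst, none, none,
        some (c, fun V => W = {j : ℕ | 0 < j ∧ (j : ℤ) ∈ V},
          fun V => (V \ {z | 0 < z}) ∪ {z | -z ∈ V ∧ 0 < -z})⟩}

section StepIff
variable [DecidableEq Lock] [DecidableEq CV]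

def Atom.post (A : Atom L Mem Lock CV) (m' : Mem) (s : PState L Mem Lock CV) :
    PState L Mem Lock CV where
  p := match A.pnew with | some d => Function.update s.p A.tid d | none => s.p
  m := m'
  u := match A.lk with | some x => Function.update s.u x.1 x.2.2 | none => s.u
  v := match A.cv with | some x => Function.update s.v x.1 (x.2.2 (s.v x.1)) | none => s.v

def Atom.srel (A : Atom L Mem Lock CV) (s s' : PState L Mem Lock CV) : Prop :=
  A.guard s ∧ ((A.mrel = none ∧ s' = A.post s.m s) ∨
    (∃ R, A.mrel = some R ∧ ∃ m', (s.m, m') ∈ R ∧ s' = A.post m' s))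


omit [DecidableEq Lock] [DecidableEq CV] in
theorem pstate_eq {s1 s2 : PState L Mem Lock CV} (hp : s1.p = s2.p) (hm : s1.m = s2.m)
    (hu : s1.u = s2.u) (hv : s1.v = s2.v) : s1 = s2 := by
  cases s1; cases s2; simp_all

theorem step_iff (P : Prog L Mem Lock CV) (a : Act L Mem Lock CV)
    (s s' : PState L Mem Lock CV) :
    Step P s a s' ↔ ∃ A ∈ atomsOf P a, A.srel s s' := by
  constructor
  · intro h
    cases h with
    | loc t _ m' ht hop hp hm =>
        exact ⟨_, ⟨rfl, ht, hop, rfl⟩, ⟨hp, by simp, by simp⟩,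
          Or.inr ⟨t.rel, rfl, m', hm, by apply pstate_eq <;> simp [Atom.post]⟩⟩
    | acq t _ l ht hop hp hu =>
        exact ⟨_, ⟨t, ht, rfl, hop, rfl⟩, ⟨hp, by simpa using hu, by simp⟩,
          Or.inl ⟨rfl, by apply pstate_eq <;> simp [Atom.post]⟩⟩
    | rel t _ l ht hop hp hu =>
        exact ⟨_, ⟨t, ht, rfl, hop, rfl⟩, ⟨hp, by simpa using hu, by simp⟩,
          Or.inl ⟨rfl, by apply pstate_eq <;> simp [Atom.post]⟩⟩
    | w1 t _ c l ht hop hp hu =>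
        exact ⟨_, ⟨t, ht, rfl, hop, rfl⟩, ⟨hp, by simpa using hu, by simp⟩,
          Or.inl ⟨rfl, by apply pstate_eq <;> simp [Atom.post]⟩⟩
    | w2 t _ c l ht hop hp hu hv =>
        exact ⟨_, ⟨t, ht, rfl, hop, rfl⟩, ⟨hp, by simpa using hu, by simpa using hv⟩,
          Or.inl ⟨rfl, by apply pstate_eq <;> simp [Atom.post]⟩⟩
    | sig t _ c j ht hop hp hj hv =>
        obtain ⟨k, rfl⟩ := Nat.exists_eq_succ_of_ne_zero (Nat.pos_iff_ne_zero.mp hj)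
        exact ⟨_, ⟨t, ht, rfl, hop, rfl⟩, ⟨hp, by simp, by simpa using hv⟩,
          Or.inl ⟨rfl, by apply pstate_eq <;> simp [Atom.post]⟩⟩
    | sigLost t _ c ht hop hp hv =>
        exact ⟨_, ⟨t, ht, rfl, hop, rfl⟩, ⟨hp, by simp, by simpa using hv⟩,
          Or.inl ⟨rfl, by apply pstate_eq <;> simp [Atom.post]⟩⟩
    | bro t _ c ht hop hp =>
        exact ⟨_, ⟨t, ht, rfl, hop, rfl⟩, ⟨hp, by simp, by simp⟩,
          Or.inl ⟨rfl, by apply pstate_eq <;> simp [Atom.post]⟩⟩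
  · rintro ⟨A, hA, ⟨hgp, hgu, hgv⟩, hrest⟩
    obtain ⟨i, e⟩ := a
    cases e with
    | loc t =>
        obtain ⟨rfl, ht, hop, rfl⟩ := hA
        rcases hrest with ⟨hnone, -⟩ | ⟨R, hR, m', hm, rfl⟩
        · simp at hnone
        · obtain rfl : t.rel = R := by simpa using hR
          have := Step.loc (P := P) t s m' ht hop hgp hm
          convert this using 1
          all_goals first
            | rfl
            | (apply pstate_eq <;> simp [Atom.post])
    | acq l =>
        obtain ⟨t, ht, htid, hop, rfl⟩ := hA
        subst htid
        rcases hrest with ⟨-, rfl⟩ | ⟨R, hR, -⟩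
        · have := Step.acq (P := P) t s l ht hop hgp
            (by simpa using hgu _ rfl)
          convert this using 1
          all_goals first
            | rfl
            | (apply pstate_eq <;> simp [Atom.post])
        · simp at hR
    | rel l =>
        obtain ⟨t, ht, htid, hop, rfl⟩ := hA
        subst htid
        rcases hrest with ⟨-, rfl⟩ | ⟨R, hR, -⟩
        · have := Step.rel (P := P) t s l ht hop hgp
            (by simpa using hgu _ rfl)
          convert this using 1
          all_goals first
            | rfl
            | (apply pstate_eq <;> simp [Atom.post])
        · simp at hR
    | w1 c l =>
        obtain ⟨t, ht, htid, hop, rfl⟩ := hA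
        subst htid
        rcases hrest with ⟨-, rfl⟩ | ⟨R, hR, -⟩
        · have := Step.w1 (P := P) t s c l ht hop hgp
            (by simpa using hgu _ rfl)
          convert this using 1
          all_goals first
            | rfl
            | (apply pstate_eq <;> simp [Atom.post])
        · simp at hR
    | w2 c l =>
        obtain ⟨t, ht, htid, hop, rfl⟩ := hA
        subst htid
        rcases hrest with ⟨-, rfl⟩ | ⟨R, hR, -⟩
        · have := Step.w2 (P := P) t s c l ht hop hgp
            (by simpa using hgu _ rfl) (by simpa using hgv _ rfl)
          convert this using 1
          all_goals first
            | rfl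
            | (apply pstate_eq <;> simp [Atom.post])
        · simp at hR
    | sig c k =>
        cases k with
        | zero =>
            obtain ⟨t, ht, htid, hop, rfl⟩ := hA
            subst htid
            rcases hrest with ⟨-, rfl⟩ | ⟨R, hR, -⟩
            · have := Step.sigLost (P := P) t s c ht hop hgp
                (by simpa using hgv _ rfl)
              convert this using 1
              all_goals first
                | rfl
                | (apply pstate_eq <;> simp [Atom.post])
            · simp at hR
        | succ k =>
            obtain ⟨t, ht, htid, hop, rfl⟩ := hA
            subst htid
            rcases hrest with ⟨-, rfl⟩ | ⟨R, hR, -⟩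
            · have := Step.sig (P := P) t s c (k+1) ht hop hgp
                (Nat.succ_pos k) (by simpa using hgv _ rfl)
              convert this using 1
              all_goals first
                | rfl
                | (apply pstate_eq <;> simp [Atom.post])
            · simp at hR
    | bro c W =>
        obtain ⟨t, ht, htid, hop, rfl⟩ := hA
        subst htid
        rcases hrest with ⟨-, rfl⟩ | ⟨R, hR, -⟩
        · obtain rfl : W = {j : ℕ | 0 < j ∧ (j : ℤ) ∈ s.v c} := by simpa using hgv _ rfl
          have := Step.bro (P := P) t s c ht hop hgp
          convert this using 1
          all_goals first
            | rfl
            | (apply pstate_eq <;> simp [Atom.post])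
        · simp at hR

end StepIff

section Abstract
variable [DecidableEq Lock] [DecidableEq CV]

/-- Compatibility of two atoms: sufficient condition for commuting. -/
structure Compat (A B : Atom L Mem Lock CV) : Prop where
  tid : A.tid ≠ B.tid
  mem : A.mrel = none ∨ B.mrel = none
  lkd : ∀ x y, A.lk = some x → B.lk = some y → x.1 ≠ y.1
  cvd : ∀ x y, A.cv = some x → B.cv = some y → x.1 ≠ y.1 ∨
      ((∀ V, x.2.1 V → (y.2.1 (x.2.2 V) ↔ y.2.1 V)) ∧
       (∀ V, y.2.1 V → (x.2.1 (y.2.2 V) ↔ x.2.1 V)) ∧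
       (∀ V, x.2.1 V → y.2.1 V → x.2.2 (y.2.2 V) = y.2.2 (x.2.2 V)))

theorem Compat.symm {A B : Atom L Mem Lock CV} (h : Compat A B) : Compat B A where
  tid := h.tid.symm
  mem := h.mem.symm
  lkd := fun x y hx hy => (h.lkd y x hy hx).symm
  cvd := fun x y hx hy => by
    rcases h.cvd y x hy hx with hne | ⟨h1, h2, h3⟩
    · exact Or.inl hne.symm
    · exact Or.inr ⟨h2, h1, fun V hx' hy' => (h3 V hy' hx').symm⟩

theorem guard_pres {A B : Atom L Mem Lock CV} (h : Compat A B)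
    {s : PState L Mem Lock CV} (hgA : A.guard s) (m' : Mem) :
    B.guard (A.post m' s) ↔ B.guard s := by
  obtain ⟨hp, hu, hv⟩ := hgA
  unfold Atom.guard
  refine and_congr ?_ (and_congr ?_ ?_)
  · rcases hA : A.pnew with _ | d <;>
      simp only [Atom.post, hA] <;>
      rw [Function.update_of_ne h.tid.symm]
  · rcases hA : A.lk with _ | x <;> simp only [Atom.post, hA]
    refine forall_congr' fun y => imp_congr_right fun hy => ?_
    rw [Function.update_of_ne (h.lkd x y hA hy).symm]
  · rcases hA : A.cv with _ | x <;> simp only [Atom.post, hA]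
    refine forall_congr' fun y => imp_congr_right fun hy => ?_
    by_cases hc : x.1 = y.1
    · rcases h.cvd x y hA hy with hne | ⟨h1, _h2, _h3⟩
      · exact absurd hc hne
      · rw [← hc, Function.update_self]
        exact h1 _ (hv x hA)
    · rw [Function.update_of_ne (Ne.symm hc)]

theorem post_comm {A B : Atom L Mem Lock CV} (h : Compat A B)
    {s : PState L Mem Lock CV} (hgA : A.guard s) (hgB : B.guard s)
    (ma mb mc : Mem) :
    A.post ma (B.post mb s) = B.post ma (A.post mc s) := by
  obtain ⟨-, -, hvA⟩ := hgA
  obtain ⟨-, -, hvB⟩ := hgB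
  apply pstate_eq
  · rcases hA : A.pnew with _ | d <;> rcases hB : B.pnew with _ | d' <;>
      simp only [Atom.post, hA, hB] <;>
      try exact Function.update_comm h.tid.symm _ _ _
  · rfl
  · rcases hA : A.lk with _ | x <;> rcases hB : B.lk with _ | y <;>
      simp only [Atom.post, hA, hB] <;>
      try exact Function.update_comm (h.lkd x y hA hB).symm _ _ _
  · rcases hA : A.cv with _ | x <;> rcases hB : B.cv with _ | y <;>
      simp only [Atom.post, hA, hB]
    by_cases hc : x.1 = y.1
    · rcases h.cvd x y hA hB with hne | ⟨-, -, h3⟩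
      · exact absurd hc hne
      · obtain ⟨c, gx, fx⟩ := x
        obtain ⟨c', gy, fy⟩ := y
        simp only at hc
        subst hc
        have h4 := h3 (s.v c) (hvA _ hA) (hvB _ hB)
        simp only at h4
        simp only [Function.update_self, Function.update_idem, h4]
    · rw [Function.update_of_ne hc, Function.update_of_ne (Ne.symm hc),
        Function.update_comm hc]

theorem srel_swap {A B : Atom L Mem Lock CV} (h : Compat A B)
    {s t u : PState L Mem Lock CV} (hA : A.srel s t) (hB : B.srel t u) :
    ∃ t', B.srel s t' ∧ A.srel t' u := by
  obtain ⟨hgA, hrA⟩ := hA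
  rcases hrA with ⟨hAn, rfl⟩ | ⟨R, hAs, ma, hma, rfl⟩
  · obtain ⟨hgBt, hrB⟩ := hB
    have hgBs : B.guard s := (guard_pres h hgA _).mp hgBt
    rcases hrB with ⟨hBn, rfl⟩ | ⟨R, hBs, mb, hmb, rfl⟩
    · exact ⟨B.post s.m s, ⟨hgBs, Or.inl ⟨hBn, rfl⟩⟩,
        ⟨(guard_pres h.symm hgBs _).mpr hgA,
         Or.inl ⟨hAn, (post_comm h hgA hgBs s.m s.m s.m).symm⟩⟩⟩
    · exact ⟨B.post mb s, ⟨hgBs, Or.inr ⟨R, hBs, mb, hmb, rfl⟩⟩,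
        ⟨(guard_pres h.symm hgBs _).mpr hgA,
         Or.inl ⟨hAn, (post_comm h hgA hgBs mb mb s.m).symm⟩⟩⟩
  · have hBn : B.mrel = none := h.mem.resolve_left (by simp [hAs])
    obtain ⟨hgBt, hrB⟩ := hB
    have hgBs : B.guard s := (guard_pres h hgA _).mp hgBt
    rcases hrB with ⟨-, rfl⟩ | ⟨R', hBs, -⟩
    · exact ⟨B.post s.m s, ⟨hgBs, Or.inl ⟨hBn, rfl⟩⟩,
        ⟨(guard_pres h.symm hgBs _).mpr hgA,
         Or.inr ⟨R, hAs, ma, hma, (post_comm h hgA hgBs ma s.m ma).symm⟩⟩⟩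
    · rw [hBn] at hBs; simp at hBs

theorem srel_enabled {A B : Atom L Mem Lock CV} (h : Compat A B)
    {s t : PState L Mem Lock CV} (hA : A.srel s t) :
    (∃ u, B.srel s u) ↔ (∃ u, B.srel t u) := by
  obtain ⟨hgA, hrA⟩ := hA
  rcases hrA with ⟨hAn, rfl⟩ | ⟨R, hAs, ma, hma, rfl⟩
  · constructor
    · rintro ⟨u, hgBs, hrB⟩
      rcases hrB with ⟨hBn, -⟩ | ⟨R, hBs, mb, hmb, -⟩
      · exact ⟨_, (guard_pres h hgA _).mpr hgBs, Or.inl ⟨hBn, rfl⟩⟩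
      · exact ⟨_, (guard_pres h hgA _).mpr hgBs, Or.inr ⟨R, hBs, mb, hmb, rfl⟩⟩
    · rintro ⟨u, hgBt, hrB⟩
      have hgBs := (guard_pres h hgA _).mp hgBt
      rcases hrB with ⟨hBn, -⟩ | ⟨R, hBs, mb, hmb, -⟩
      · exact ⟨_, hgBs, Or.inl ⟨hBn, rfl⟩⟩
      · exact ⟨_, hgBs, Or.inr ⟨R, hBs, mb, hmb, rfl⟩⟩
  · have hBn : B.mrel = none := h.mem.resolve_left (by simp [hAs])
    constructor
    · rintro ⟨u, hgBs, -⟩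
      exact ⟨_, (guard_pres h hgA _).mpr hgBs, Or.inl ⟨hBn, rfl⟩⟩
    · rintro ⟨u, hgBt, -⟩
      exact ⟨_, (guard_pres h hgA _).mp hgBt, Or.inl ⟨hBn, rfl⟩⟩

end Abstract

section Assemble
variable [DecidableEq Lock] [DecidableEq CV]

theorem commute_of_compat (P : Prog L Mem Lock CV) (a b : Act L Mem Lock CV)
    (hab : ∀ A ∈ atomsOf P a, ∀ B ∈ atomsOf P b, Compat A B)
    (s : PState L Mem Lock CV) : CommuteAt P a b s := by
  constructor
  · intro s' hstep
    rw [step_iff] at hstep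
    obtain ⟨A, hA, hsr⟩ := hstep
    constructor
    · rintro ⟨u, hu⟩
      rw [step_iff] at hu
      obtain ⟨B, hB, hbu⟩ := hu
      obtain ⟨u', hu'⟩ := (srel_enabled (hab A hA B hB) hsr).mp ⟨u, hbu⟩
      exact ⟨u', (step_iff ..).mpr ⟨B, hB, hu'⟩⟩
    · rintro ⟨u, hu⟩
      rw [step_iff] at hu
      obtain ⟨B, hB, hbu⟩ := hu
      obtain ⟨u', hu'⟩ := (srel_enabled (hab A hA B hB) hsr).mpr ⟨u, hbu⟩
      exact ⟨u', (step_iff ..).mpr ⟨B, hB, hu'⟩⟩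
  · intro _ _
    ext u
    simp only [Set.mem_setOf_eq]
    constructor
    · rintro ⟨t1, h1, h2⟩
      rw [step_iff] at h1 h2
      obtain ⟨A, hA, hsa⟩ := h1
      obtain ⟨B, hB, hsb⟩ := h2
      obtain ⟨t', h1', h2'⟩ := srel_swap (hab A hA B hB) hsa hsb
      exact ⟨t', (step_iff ..).mpr ⟨B, hB, h1'⟩, (step_iff ..).mpr ⟨A, hA, h2'⟩⟩
    · rintro ⟨t1, h1, h2⟩
      rw [step_iff] at h1 h2
      obtain ⟨B, hB, hsb⟩ := h1
      obtain ⟨A, hA, hsa⟩ := h2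
      obtain ⟨t', h1', h2'⟩ := srel_swap (hab A hA B hB).symm hsb hsa
      exact ⟨t', (step_iff ..).mpr ⟨A, hA, h1'⟩, (step_iff ..).mpr ⟨B, hB, h2'⟩⟩

end Assemble

/-! ### CV-level compatibility facts -/

def CvOk (x y : (Set ℤ → Prop) × (Set ℤ → Set ℤ)) : Prop :=
  (∀ V, x.1 V → (y.1 (x.2 V) ↔ y.1 V)) ∧
  (∀ V, y.1 V → (x.1 (y.2 V) ↔ x.1 V)) ∧
  (∀ V, x.1 V → y.1 V → x.2 (y.2 V) = y.2 (x.2 V))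

theorem CvOk.symm {x y} (h : CvOk x y) : CvOk y x :=
  ⟨h.2.1, h.1, fun V hy hx => (h.2.2 V hx hy).symm⟩

theorem cvok_w1_w1 (i j : ℕ) :
    CvOk (fun _ => True, fun V => V ∪ {(i : ℤ)})
      (fun _ => True, fun V => V ∪ {(j : ℤ)}) := by
  refine ⟨?_, ?_, ?_⟩ <;> dsimp only <;> intro V _
  · exact Iff.rfl
  · exact Iff.rfl
  · intro _
    ext z; simp only [Set.mem_union, Set.mem_singleton_iff]; tauto

theorem cvok_w1_w2 (i j : ℕ) (hij : i ≠ j) :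
    CvOk (fun _ => True, fun V => V ∪ {(i : ℤ)})
      (fun V => -(j : ℤ) ∈ V, fun V => V \ {-(j : ℤ)}) := by
  have hne : -(j : ℤ) ≠ (i : ℤ) := by omega
  refine ⟨?_, ?_, ?_⟩ <;> dsimp only <;> intro V _
  · simp [hne]
  · exact Iff.rfl
  · intro _
    ext z
    by_cases hz : z = (i : ℤ) <;>
      simp only [Set.mem_union, Set.mem_diff, Set.mem_singleton_iff, hz, hne.symm] <;>
      tauto

theorem cvok_w1_sig (i k : ℕ) (hk : 0 < k) (hki : k ≠ i) :
    CvOk (fun _ => True, fun V => V ∪ {(i : ℤ)})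
      (fun V => ((k : ℕ) : ℤ) ∈ V, fun V => (V \ {((k : ℕ) : ℤ)}) ∪ {-((k : ℕ) : ℤ)}) := by
  have h1 : ((k : ℕ) : ℤ) ≠ (i : ℤ) := by omega
  have h2 : (i : ℤ) ≠ -((k : ℕ) : ℤ) := by omega
  refine ⟨?_, ?_, ?_⟩ <;> dsimp only <;> intro V _
  · simp [h1]
  · exact Iff.rfl
  · intro _
    ext z
    by_cases hz : z = (i : ℤ) <;>
      simp only [Set.mem_union, Set.mem_diff, Set.mem_singleton_iff, hz, h1.symm, h2] <;>
      tauto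

theorem cvok_w2_w2 (i j : ℕ) (hij : i ≠ j) :
    CvOk (fun V => -(i : ℤ) ∈ V, fun V => V \ {-(i : ℤ)})
      (fun V => -(j : ℤ) ∈ V, fun V => V \ {-(j : ℤ)}) := by
  have hne : -(i : ℤ) ≠ -(j : ℤ) := by omega
  refine ⟨?_, ?_, ?_⟩ <;> dsimp only <;> intro V _
  · simp [hne.symm]
  · simp [hne]
  · intro _
    ext z; simp only [Set.mem_diff, Set.mem_singleton_iff]; tauto

theorem cvok_w2_s0 (i : ℕ) :
    CvOk (fun V => -(i : ℤ) ∈ V, fun V => V \ {-(i : ℤ)})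
      (fun V => ∀ z ∈ V, ¬ (0 : ℤ) < z, id) := by
  refine ⟨?_, ?_, ?_⟩ <;> dsimp only <;> intro V _
  · constructor
    · intro h z hz
      by_cases hzi : z = -(i : ℤ)
      · subst hzi; omega
      · exact h z ⟨hz, hzi⟩
    · intro h z hz
      exact h z hz.1
  · exact Iff.rfl
  · exact fun _ => rfl

theorem cvok_w2_sig (i k : ℕ) (hk : 0 < k) (hki : k ≠ i) :
    CvOk (fun V => -(i : ℤ) ∈ V, fun V => V \ {-(i : ℤ)})
      (fun V => ((k : ℕ) : ℤ) ∈ V, fun V => (V \ {((k : ℕ) : ℤ)}) ∪ {-((k : ℕ) : ℤ)}) := by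
  have h1 : ((k : ℕ) : ℤ) ≠ -(i : ℤ) := by omega
  have h2 : -(i : ℤ) ≠ -((k : ℕ) : ℤ) := by omega
  refine ⟨?_, ?_, ?_⟩ <;> dsimp only <;> intro V _
  · simp [h1]
  · simp [h1.symm, h2]
  · intro _
    ext z
    by_cases hz : z = -((k : ℕ) : ℤ) <;>
      simp only [Set.mem_union, Set.mem_diff, Set.mem_singleton_iff, hz, h2.symm, h1.symm] <;>
      tauto

theorem cvok_sig_sig (k m : ℕ) (hk : 0 < k) (hm : 0 < m) (hkm : k ≠ m) :
    CvOk (fun V => ((k : ℕ) : ℤ) ∈ V, fun V => (V \ {((k : ℕ) : ℤ)}) ∪ {-((k : ℕ) : ℤ)})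
      (fun V => ((m : ℕ) : ℤ) ∈ V, fun V => (V \ {((m : ℕ) : ℤ)}) ∪ {-((m : ℕ) : ℤ)}) := by
  have h1 : ((m : ℕ) : ℤ) ≠ ((k : ℕ) : ℤ) := by omega
  have h2 : ((m : ℕ) : ℤ) ≠ -((k : ℕ) : ℤ) := by omega
  have h3 : ((k : ℕ) : ℤ) ≠ -((m : ℕ) : ℤ) := by omega
  have h4 : -((k : ℕ) : ℤ) ≠ -((m : ℕ) : ℤ) := by omega
  refine ⟨?_, ?_, ?_⟩ <;> dsimp only <;> intro V _
  · simp [h1, h2]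
  · simp [h1.symm, h3]
  · intro _
    ext z
    by_cases hz1 : z = -((k : ℕ) : ℤ) <;> by_cases hz2 : z = -((m : ℕ) : ℤ) <;>
      simp only [Set.mem_union, Set.mem_diff, Set.mem_singleton_iff, hz1, hz2,
        h1, h2, h3, h4, h4.symm, h2.symm, h3.symm, h1.symm] <;>
      tauto

theorem cvok_s0_s0 :
    CvOk (fun V => ∀ z ∈ V, ¬ (0 : ℤ) < z, id)
      (fun V => ∀ z ∈ V, ¬ (0 : ℤ) < z, id) :=
  ⟨fun _ _ => Iff.rfl, fun _ _ => Iff.rfl, fun _ _ _ => rfl⟩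

/-- The broadcast update fixes sets without positive elements. -/
theorem bro_fix {V : Set ℤ} (h : (∅ : Set ℕ) = {n : ℕ | 0 < n ∧ (n : ℤ) ∈ V}) :
    (V \ {z | 0 < z}) ∪ {z | -z ∈ V ∧ 0 < -z} = V := by
  have hnp : ∀ z ∈ V, ¬ (0 : ℤ) < z := by
    intro z hz hpos
    have h2 : z.toNat ∈ ({n : ℕ | 0 < n ∧ (n : ℤ) ∈ V} : Set ℕ) := by
      simp only [Set.mem_setOf_eq]
      refine ⟨by omega, ?_⟩
      rw [Int.toNat_of_nonneg (le_of_lt hpos)]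
      exact hz
    rw [← h] at h2
    exact h2
  ext z
  simp only [Set.mem_union, Set.mem_diff, Set.mem_setOf_eq]
  constructor
  · rintro (⟨hz, -⟩ | ⟨hz, hpos⟩)
    · exact hz
    · exact absurd hpos (hnp _ hz)
  · intro hz
    exact Or.inl ⟨hz, hnp _ hz⟩

theorem cvok_s0_bro0 :
    CvOk (fun V => ∀ z ∈ V, ¬ (0 : ℤ) < z, id)
      (fun V => (∅ : Set ℕ) = {n : ℕ | 0 < n ∧ (n : ℤ) ∈ V},
        fun V => (V \ {z | 0 < z}) ∪ {z | -z ∈ V ∧ 0 < -z}) := by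
  refine ⟨?_, ?_, ?_⟩ <;> dsimp only <;> intro V hV
  · exact Iff.rfl
  · rw [bro_fix hV]
  · intro hV'
    rw [bro_fix hV']
    exact (bro_fix hV').symm

theorem cvok_bro0_bro0 :
    CvOk (fun V => (∅ : Set ℕ) = {n : ℕ | 0 < n ∧ (n : ℤ) ∈ V},
        fun V => (V \ {z | 0 < z}) ∪ {z | -z ∈ V ∧ 0 < -z})
      (fun V => (∅ : Set ℕ) = {n : ℕ | 0 < n ∧ (n : ℤ) ∈ V},
        fun V => (V \ {z | 0 < z}) ∪ {z | -z ∈ V ∧ 0 < -z}) := by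
  refine ⟨?_, ?_, ?_⟩ <;> dsimp only <;> intro V hV
  · rw [bro_fix hV]
  · rw [bro_fix hV]
  · intro hV'
    rw [bro_fix hV, bro_fix hV]

theorem cvok_w2_bro (i : ℕ) (W : Set ℕ) (hiW : i ∉ W) :
    CvOk (fun V => -(i : ℤ) ∈ V, fun V => V \ {-(i : ℤ)})
      (fun V => W = {n : ℕ | 0 < n ∧ (n : ℤ) ∈ V},
        fun V => (V \ {z | 0 < z}) ∪ {z | -z ∈ V ∧ 0 < -z}) := by
  refine ⟨?_, ?_, ?_⟩ <;> dsimp only <;> intro V hV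
  · have heq : {n : ℕ | 0 < n ∧ (n : ℤ) ∈ V \ {-(i : ℤ)}} = {n : ℕ | 0 < n ∧ (n : ℤ) ∈ V} := by
      ext n
      simp only [Set.mem_setOf_eq, Set.mem_diff, Set.mem_singleton_iff]
      constructor
      · rintro ⟨hn, hv, -⟩; exact ⟨hn, hv⟩
      · rintro ⟨hn, hv⟩; exact ⟨hn, hv, by omega⟩
    rw [heq]
  · have hni : ¬ ((i : ℤ) ∈ V ∧ 0 < (i : ℤ)) := by
      rintro ⟨hv, hpos⟩
      apply hiW
      rw [hV]
      exact ⟨by omega, hv⟩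
    constructor
    · intro h
      rcases h with ⟨hz, -⟩ | hz
      · exact hz
      · simp only [Set.mem_setOf_eq, neg_neg] at hz
        exact absurd ⟨hz.1, hz.2⟩ hni
    · intro hz
      exact Or.inl ⟨hz, by simp only [Set.mem_setOf_eq]; omega⟩
  · intro hV'
    have hni : ¬ ((i : ℤ) ∈ V ∧ 0 < (i : ℤ)) := by
      rintro ⟨hv, hpos⟩
      apply hiW
      rw [hV']
      exact ⟨by omega, hv⟩
    ext z
    simp only [Set.mem_union, Set.mem_diff, Set.mem_setOf_eq, Set.mem_singleton_iff]
    constructor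
    · rintro ⟨⟨hz, hnp⟩ | ⟨hz, hpos⟩, hzi⟩
      · exact Or.inl ⟨⟨hz, hzi⟩, hnp⟩
      · refine Or.inr ⟨⟨hz, fun hzeq => ?_⟩, hpos⟩
        rw [hzeq] at hpos
        omega
    · rintro (⟨⟨hz, hzi⟩, hnp⟩ | ⟨⟨hz, hzn⟩, hpos⟩)
      · exact ⟨Or.inl ⟨hz, hnp⟩, hzi⟩
      · refine ⟨Or.inr ⟨hz, hpos⟩, fun hzeq => ?_⟩
        rw [hzeq] at hz hpos
        simp only [neg_neg] at hz hpos
        exact hni ⟨hz, hpos⟩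

section CompatOfIndep
variable [DecidableEq Lock] [DecidableEq CV]

theorem compat_of_indep (P : Prog L Mem Lock CV)
    {i j : ℕ} {ea eb : Eff L Mem Lock CV} (hij : i ≠ j)
    (h1 : ¬ Dep0 (i, ea) (j, eb)) (h2 : ¬ Dep0 (j, eb) (i, ea))
    (hnl : (∀ t, ea ≠ Eff.loc t) ∨ (∀ t, eb ≠ Eff.loc t)) :
    ∀ A ∈ atomsOf P (i, ea), ∀ B ∈ atomsOf P (j, eb), Compat A B := by
  intro A hA B hB
  rcases ea with t | l | l | ⟨c, l⟩ | ⟨c, l⟩ | ⟨c, k⟩ | ⟨c, W⟩ <;>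
    rcases eb with t' | l' | l' | ⟨c', l'⟩ | ⟨c', l'⟩ | ⟨c', k'⟩ | ⟨c', W'⟩
  · obtain ⟨hti, hTa, hOpa, rfl⟩ := hA
    obtain ⟨htj, hTb, hOpb, rfl⟩ := hB
    rcases hnl with h | h
    · exact absurd rfl (h t)
    · exact absurd rfl (h t')
  · obtain ⟨hti, hTa, hOpa, rfl⟩ := hA
    obtain ⟨tb, hTb, htj, hOpb, rfl⟩ := hB
    refine ⟨(by rw [← hti]; exact hij), by simp, (fun x y hx _ => (by cases hx)), ?_⟩
    exact fun x y hx _ => (by cases hx)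
  · obtain ⟨hti, hTa, hOpa, rfl⟩ := hA
    obtain ⟨tb, hTb, htj, hOpb, rfl⟩ := hB
    refine ⟨(by rw [← hti]; exact hij), by simp, (fun x y hx _ => (by cases hx)), ?_⟩
    exact fun x y hx _ => (by cases hx)
  · obtain ⟨hti, hTa, hOpa, rfl⟩ := hA
    obtain ⟨tb, hTb, htj, hOpb, rfl⟩ := hB
    refine ⟨(by rw [← hti]; exact hij), by simp, (fun x y hx _ => (by cases hx)), ?_⟩
    exact fun x y hx _ => (by cases hx)
  · obtain ⟨hti, hTa, hOpa, rfl⟩ := hA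
    obtain ⟨tb, hTb, htj, hOpb, rfl⟩ := hB
    refine ⟨(by rw [← hti]; exact hij), by simp, (fun x y hx _ => (by cases hx)), ?_⟩
    exact fun x y hx _ => (by cases hx)
  · rcases k' with _ | k'
    · obtain ⟨hti, hTa, hOpa, rfl⟩ := hA
      obtain ⟨tb, hTb, htj, hOpb, rfl⟩ := hB
      refine ⟨(by rw [← hti]; exact hij), by simp, (fun x y hx _ => (by cases hx)), ?_⟩
      exact fun x y hx _ => (by cases hx)
    · obtain ⟨hti, hTa, hOpa, rfl⟩ := hA
      obtain ⟨tb, hTb, htj, hOpb, rfl⟩ := hB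
      refine ⟨(by rw [← hti]; exact hij), by simp, (fun x y hx _ => (by cases hx)), ?_⟩
      exact fun x y hx _ => (by cases hx)
  · obtain ⟨hti, hTa, hOpa, rfl⟩ := hA
    obtain ⟨tb, hTb, htj, hOpb, rfl⟩ := hB
    refine ⟨(by rw [← hti]; exact hij), by simp, (fun x y hx _ => (by cases hx)), ?_⟩
    exact fun x y hx _ => (by cases hx)
  · obtain ⟨ta, hTa, hti, hOpa, rfl⟩ := hA
    obtain ⟨htj, hTb, hOpb, rfl⟩ := hB
    refine ⟨(by rw [← htj]; exact hij), by simp, (fun x y _ hy => (by cases hy)), ?_⟩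
    exact fun x y hx _ => (by cases hx)
  · obtain ⟨ta, hTa, hti, hOpa, rfl⟩ := hA
    obtain ⟨tb, hTb, htj, hOpb, rfl⟩ := hB
    refine ⟨hij, by simp, (by intro x y hx hy; cases hx; cases hy; exact fun h => h1 h.symm), ?_⟩
    exact fun x y hx _ => (by cases hx)
  · obtain ⟨ta, hTa, hti, hOpa, rfl⟩ := hA
    obtain ⟨tb, hTb, htj, hOpb, rfl⟩ := hB
    refine ⟨hij, by simp, (by intro x y hx hy; cases hx; cases hy; exact fun h => h1 h.symm), ?_⟩
    exact fun x y hx _ => (by cases hx)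
  · obtain ⟨ta, hTa, hti, hOpa, rfl⟩ := hA
    obtain ⟨tb, hTb, htj, hOpb, rfl⟩ := hB
    refine ⟨hij, by simp, (by intro x y hx hy; cases hx; cases hy; exact fun h => h1 h.symm), ?_⟩
    exact fun x y hx _ => (by cases hx)
  · obtain ⟨ta, hTa, hti, hOpa, rfl⟩ := hA
    obtain ⟨tb, hTb, htj, hOpb, rfl⟩ := hB
    refine ⟨hij, by simp, (by intro x y hx hy; cases hx; cases hy; exact fun h => h1 h.symm), ?_⟩
    exact fun x y hx _ => (by cases hx)
  · rcases k' with _ | k'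
    · obtain ⟨ta, hTa, hti, hOpa, rfl⟩ := hA
      obtain ⟨tb, hTb, htj, hOpb, rfl⟩ := hB
      refine ⟨hij, by simp, (fun x y _ hy => (by cases hy)), ?_⟩
      exact fun x y hx _ => (by cases hx)
    · obtain ⟨ta, hTa, hti, hOpa, rfl⟩ := hA
      obtain ⟨tb, hTb, htj, hOpb, rfl⟩ := hB
      refine ⟨hij, by simp, (fun x y _ hy => (by cases hy)), ?_⟩
      exact fun x y hx _ => (by cases hx)
  · obtain ⟨ta, hTa, hti, hOpa, rfl⟩ := hA
    obtain ⟨tb, hTb, htj, hOpb, rfl⟩ := hB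
    refine ⟨hij, by simp, (fun x y _ hy => (by cases hy)), ?_⟩
    exact fun x y hx _ => (by cases hx)
  · obtain ⟨ta, hTa, hti, hOpa, rfl⟩ := hA
    obtain ⟨htj, hTb, hOpb, rfl⟩ := hB
    refine ⟨(by rw [← htj]; exact hij), by simp, (fun x y _ hy => (by cases hy)), ?_⟩
    exact fun x y hx _ => (by cases hx)
  · obtain ⟨ta, hTa, hti, hOpa, rfl⟩ := hA
    obtain ⟨tb, hTb, htj, hOpb, rfl⟩ := hB
    refine ⟨hij, by simp, (by intro x y hx hy; cases hx; cases hy; exact fun h => h1 h.symm), ?_⟩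
    exact fun x y hx _ => (by cases hx)
  · obtain ⟨ta, hTa, hti, hOpa, rfl⟩ := hA
    obtain ⟨tb, hTb, htj, hOpb, rfl⟩ := hB
    refine ⟨hij, by simp, (by intro x y hx hy; cases hx; cases hy; exact fun h => h1 h.symm), ?_⟩
    exact fun x y hx _ => (by cases hx)
  · obtain ⟨ta, hTa, hti, hOpa, rfl⟩ := hA
    obtain ⟨tb, hTb, htj, hOpb, rfl⟩ := hB
    refine ⟨hij, by simp, (by intro x y hx hy; cases hx; cases hy; exact fun h => h1 h.symm), ?_⟩
    exact fun x y hx _ => (by cases hx)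
  · obtain ⟨ta, hTa, hti, hOpa, rfl⟩ := hA
    obtain ⟨tb, hTb, htj, hOpb, rfl⟩ := hB
    refine ⟨hij, by simp, (by intro x y hx hy; cases hx; cases hy; exact fun h => h1 h.symm), ?_⟩
    exact fun x y hx _ => (by cases hx)
  · rcases k' with _ | k'
    · obtain ⟨ta, hTa, hti, hOpa, rfl⟩ := hA
      obtain ⟨tb, hTb, htj, hOpb, rfl⟩ := hB
      refine ⟨hij, by simp, (fun x y _ hy => (by cases hy)), ?_⟩
      exact fun x y hx _ => (by cases hx)
    · obtain ⟨ta, hTa, hti, hOpa, rfl⟩ := hA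
      obtain ⟨tb, hTb, htj, hOpb, rfl⟩ := hB
      refine ⟨hij, by simp, (fun x y _ hy => (by cases hy)), ?_⟩
      exact fun x y hx _ => (by cases hx)
  · obtain ⟨ta, hTa, hti, hOpa, rfl⟩ := hA
    obtain ⟨tb, hTb, htj, hOpb, rfl⟩ := hB
    refine ⟨hij, by simp, (fun x y _ hy => (by cases hy)), ?_⟩
    exact fun x y hx _ => (by cases hx)
  · obtain ⟨ta, hTa, hti, hOpa, rfl⟩ := hA
    obtain ⟨htj, hTb, hOpb, rfl⟩ := hB
    refine ⟨(by rw [← htj]; exact hij), by simp, (fun x y _ hy => (by cases hy)), ?_⟩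
    exact fun x y _ hy => (by cases hy)
  · obtain ⟨ta, hTa, hti, hOpa, rfl⟩ := hA
    obtain ⟨tb, hTb, htj, hOpb, rfl⟩ := hB
    refine ⟨hij, by simp, (by intro x y hx hy; cases hx; cases hy; exact fun h => h1 (Or.inl h.symm)), ?_⟩
    exact fun x y _ hy => (by cases hy)
  · obtain ⟨ta, hTa, hti, hOpa, rfl⟩ := hA
    obtain ⟨tb, hTb, htj, hOpb, rfl⟩ := hB
    refine ⟨hij, by simp, (by intro x y hx hy; cases hx; cases hy; exact fun h => h1 (Or.inl h.symm)), ?_⟩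
    exact fun x y _ hy => (by cases hy)
  · obtain ⟨ta, hTa, hti, hOpa, rfl⟩ := hA
    obtain ⟨tb, hTb, htj, hOpb, rfl⟩ := hB
    refine ⟨hij, by simp, (by intro x y hx hy; cases hx; cases hy; exact fun h => h1 (Or.inl h.symm)), ?_⟩
    intro x y hx hy
    cases hx
    cases hy
    by_cases hc : c = c'
    · subst hc
      exact Or.inr (cvok_w1_w1 i j)
    · exact Or.inl hc
  · obtain ⟨ta, hTa, hti, hOpa, rfl⟩ := hA
    obtain ⟨tb, hTb, htj, hOpb, rfl⟩ := hB
    refine ⟨hij, by simp, (by intro x y hx hy; cases hx; cases hy; exact fun h => h1 (Or.inl h.symm)), ?_⟩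
    intro x y hx hy
    cases hx
    cases hy
    by_cases hc : c = c'
    · subst hc
      exact Or.inr (cvok_w1_w2 i j hij)
    · exact Or.inl hc
  · rcases k' with _ | k'
    · obtain ⟨ta, hTa, hti, hOpa, rfl⟩ := hA
      obtain ⟨tb, hTb, htj, hOpb, rfl⟩ := hB
      refine ⟨hij, by simp, (fun x y _ hy => (by cases hy)), ?_⟩
      intro x y hx hy
      cases hx
      cases hy
      by_cases hc : c = c'
      · subst hc
        exact absurd (Or.inr (Or.inl rfl) : Dep0 (i, Eff.w1 c l) ((j : ℕ), Eff.sig c 0)) h1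
      · exact Or.inl hc
    · obtain ⟨ta, hTa, hti, hOpa, rfl⟩ := hA
      obtain ⟨tb, hTb, htj, hOpb, rfl⟩ := hB
      refine ⟨hij, by simp, (fun x y _ hy => (by cases hy)), ?_⟩
      intro x y hx hy
      cases hx
      cases hy
      by_cases hc : c = c'
      · subst hc
        have hki : k' + 1 ≠ i := fun h => h1 (Or.inr (Or.inr (Or.inl (by rw [h]))))
        exact Or.inr (cvok_w1_sig i (k'+1) (Nat.succ_pos _) hki)
      · exact Or.inl hc
  · obtain ⟨ta, hTa, hti, hOpa, rfl⟩ := hA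
    obtain ⟨tb, hTb, htj, hOpb, rfl⟩ := hB
    refine ⟨hij, by simp, (fun x y _ hy => (by cases hy)), ?_⟩
    intro x y hx hy
    cases hx
    cases hy
    by_cases hc : c = c'
    · subst hc
      exact absurd (Or.inr (Or.inr (Or.inr ⟨W', rfl⟩)) : Dep0 (i, Eff.w1 c l) ((j : ℕ), Eff.bro c W')) h1
    · exact Or.inl hc
  · obtain ⟨ta, hTa, hti, hOpa, rfl⟩ := hA
    obtain ⟨htj, hTb, hOpb, rfl⟩ := hB
    refine ⟨(by rw [← htj]; exact hij), by simp, (fun x y _ hy => (by cases hy)), ?_⟩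
    exact fun x y _ hy => (by cases hy)
  · obtain ⟨ta, hTa, hti, hOpa, rfl⟩ := hA
    obtain ⟨tb, hTb, htj, hOpb, rfl⟩ := hB
    refine ⟨hij, by simp, (by intro x y hx hy; cases hx; cases hy; exact fun h => h1 (Or.inl h.symm)), ?_⟩
    exact fun x y _ hy => (by cases hy)
  · obtain ⟨ta, hTa, hti, hOpa, rfl⟩ := hA
    obtain ⟨tb, hTb, htj, hOpb, rfl⟩ := hB
    refine ⟨hij, by simp, (by intro x y hx hy; cases hx; cases hy; exact fun h => h1 (Or.inl h.symm)), ?_⟩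
    exact fun x y _ hy => (by cases hy)
  · obtain ⟨ta, hTa, hti, hOpa, rfl⟩ := hA
    obtain ⟨tb, hTb, htj, hOpb, rfl⟩ := hB
    refine ⟨hij, by simp, (by intro x y hx hy; cases hx; cases hy; exact fun h => h1 (Or.inl h.symm)), ?_⟩
    intro x y hx hy
    cases hx
    cases hy
    by_cases hc : c = c'
    · subst hc
      exact Or.inr (cvok_w1_w2 j i hij.symm).symm
    · exact Or.inl hc
  · obtain ⟨ta, hTa, hti, hOpa, rfl⟩ := hA
    obtain ⟨tb, hTb, htj, hOpb, rfl⟩ := hB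
    refine ⟨hij, by simp, (by intro x y hx hy; cases hx; cases hy; exact fun h => h1 (Or.inl h.symm)), ?_⟩
    intro x y hx hy
    cases hx
    cases hy
    by_cases hc : c = c'
    · subst hc
      exact Or.inr (cvok_w2_w2 i j hij)
    · exact Or.inl hc
  · rcases k' with _ | k'
    · obtain ⟨ta, hTa, hti, hOpa, rfl⟩ := hA
      obtain ⟨tb, hTb, htj, hOpb, rfl⟩ := hB
      refine ⟨hij, by simp, (fun x y _ hy => (by cases hy)), ?_⟩
      intro x y hx hy
      cases hx
      cases hy
      by_cases hc : c = c'
      · subst hc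
        exact Or.inr (cvok_w2_s0 i)
      · exact Or.inl hc
    · obtain ⟨ta, hTa, hti, hOpa, rfl⟩ := hA
      obtain ⟨tb, hTb, htj, hOpb, rfl⟩ := hB
      refine ⟨hij, by simp, (fun x y _ hy => (by cases hy)), ?_⟩
      intro x y hx hy
      cases hx
      cases hy
      by_cases hc : c = c'
      · subst hc
        have hki : k' + 1 ≠ i := fun h => h1 (Or.inr (Or.inl (by rw [h])))
        exact Or.inr (cvok_w2_sig i (k'+1) (Nat.succ_pos _) hki)
      · exact Or.inl hc
  · obtain ⟨ta, hTa, hti, hOpa, rfl⟩ := hA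
    obtain ⟨tb, hTb, htj, hOpb, rfl⟩ := hB
    refine ⟨hij, by simp, (fun x y _ hy => (by cases hy)), ?_⟩
    intro x y hx hy
    cases hx
    cases hy
    by_cases hc : c = c'
    · subst hc
      have hiW : i ∉ W' := fun hm => h1 (Or.inr (Or.inr ⟨W', hm, rfl⟩))
      exact Or.inr (cvok_w2_bro i W' hiW)
    · exact Or.inl hc
  · rcases k with _ | k
    · obtain ⟨ta, hTa, hti, hOpa, rfl⟩ := hA
      obtain ⟨htj, hTb, hOpb, rfl⟩ := hB
      refine ⟨(by rw [← htj]; exact hij), by simp, (fun x y hx _ => (by cases hx)), ?_⟩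
      exact fun x y _ hy => (by cases hy)
    · obtain ⟨ta, hTa, hti, hOpa, rfl⟩ := hA
      obtain ⟨htj, hTb, hOpb, rfl⟩ := hB
      refine ⟨(by rw [← htj]; exact hij), by simp, (fun x y hx _ => (by cases hx)), ?_⟩
      exact fun x y _ hy => (by cases hy)
  · rcases k with _ | k
    · obtain ⟨ta, hTa, hti, hOpa, rfl⟩ := hA
      obtain ⟨tb, hTb, htj, hOpb, rfl⟩ := hB
      refine ⟨hij, by simp, (fun x y hx _ => (by cases hx)), ?_⟩
      exact fun x y _ hy => (by cases hy)
    · obtain ⟨ta, hTa, hti, hOpa, rfl⟩ := hA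
      obtain ⟨tb, hTb, htj, hOpb, rfl⟩ := hB
      refine ⟨hij, by simp, (fun x y hx _ => (by cases hx)), ?_⟩
      exact fun x y _ hy => (by cases hy)
  · rcases k with _ | k
    · obtain ⟨ta, hTa, hti, hOpa, rfl⟩ := hA
      obtain ⟨tb, hTb, htj, hOpb, rfl⟩ := hB
      refine ⟨hij, by simp, (fun x y hx _ => (by cases hx)), ?_⟩
      exact fun x y _ hy => (by cases hy)
    · obtain ⟨ta, hTa, hti, hOpa, rfl⟩ := hA
      obtain ⟨tb, hTb, htj, hOpb, rfl⟩ := hB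
      refine ⟨hij, by simp, (fun x y hx _ => (by cases hx)), ?_⟩
      exact fun x y _ hy => (by cases hy)
  · rcases k with _ | k
    · obtain ⟨ta, hTa, hti, hOpa, rfl⟩ := hA
      obtain ⟨tb, hTb, htj, hOpb, rfl⟩ := hB
      refine ⟨hij, by simp, (fun x y hx _ => (by cases hx)), ?_⟩
      intro x y hx hy
      cases hx
      cases hy
      by_cases hc : c = c'
      · subst hc
        exact absurd (Or.inl ⟨l', rfl⟩ : Dep0 (i, Eff.sig c 0) ((j : ℕ), Eff.w1 c l')) h1
      · exact Or.inl hc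
    · obtain ⟨ta, hTa, hti, hOpa, rfl⟩ := hA
      obtain ⟨tb, hTb, htj, hOpb, rfl⟩ := hB
      refine ⟨hij, by simp, (fun x y hx _ => (by cases hx)), ?_⟩
      intro x y hx hy
      cases hx
      cases hy
      by_cases hc : c = c'
      · subst hc
        have hkj : j ≠ k + 1 := fun h => h1 (Or.inl ⟨l', h, Or.inl rfl⟩)
        exact Or.inr (cvok_w1_sig j (k+1) (Nat.succ_pos _) (Ne.symm hkj)).symm
      · exact Or.inl hc
  · rcases k with _ | k
    · obtain ⟨ta, hTa, hti, hOpa, rfl⟩ := hA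
      obtain ⟨tb, hTb, htj, hOpb, rfl⟩ := hB
      refine ⟨hij, by simp, (fun x y hx _ => (by cases hx)), ?_⟩
      intro x y hx hy
      cases hx
      cases hy
      by_cases hc : c = c'
      · subst hc
        exact Or.inr (cvok_w2_s0 j).symm
      · exact Or.inl hc
    · obtain ⟨ta, hTa, hti, hOpa, rfl⟩ := hA
      obtain ⟨tb, hTb, htj, hOpb, rfl⟩ := hB
      refine ⟨hij, by simp, (fun x y hx _ => (by cases hx)), ?_⟩
      intro x y hx hy
      cases hx
      cases hy
      by_cases hc : c = c'
      · subst hc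
        have hkj : j ≠ k + 1 := fun h => h1 (Or.inl ⟨l', h, Or.inr rfl⟩)
        exact Or.inr (cvok_w2_sig j (k+1) (Nat.succ_pos _) (Ne.symm hkj)).symm
      · exact Or.inl hc
  · rcases k with _ | k <;> rcases k' with _ | k'
    · obtain ⟨ta, hTa, hti, hOpa, rfl⟩ := hA
      obtain ⟨tb, hTb, htj, hOpb, rfl⟩ := hB
      refine ⟨hij, by simp, (fun x y hx _ => (by cases hx)), ?_⟩
      intro x y hx hy
      cases hx
      cases hy
      by_cases hc : c = c'
      · subst hc
        exact Or.inr cvok_s0_s0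
      · exact Or.inl hc
    · obtain ⟨ta, hTa, hti, hOpa, rfl⟩ := hA
      obtain ⟨tb, hTb, htj, hOpb, rfl⟩ := hB
      refine ⟨hij, by simp, (fun x y hx _ => (by cases hx)), ?_⟩
      intro x y hx hy
      cases hx
      cases hy
      by_cases hc : c = c'
      · subst hc
        exact absurd (Or.inr (Or.inl ⟨k'+1, Nat.succ_ne_zero _, rfl⟩) : Dep0 (i, Eff.sig c 0) ((j : ℕ), Eff.sig c (k'+1))) h1
      · exact Or.inl hc
    · obtain ⟨ta, hTa, hti, hOpa, rfl⟩ := hA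
      obtain ⟨tb, hTb, htj, hOpb, rfl⟩ := hB
      refine ⟨hij, by simp, (fun x y hx _ => (by cases hx)), ?_⟩
      intro x y hx hy
      cases hx
      cases hy
      by_cases hc : c = c'
      · subst hc
        exact absurd (Or.inr (Or.inl rfl) : Dep0 (i, Eff.sig c (k+1)) ((j : ℕ), Eff.sig c 0)) h1
      · exact Or.inl hc
    · obtain ⟨ta, hTa, hti, hOpa, rfl⟩ := hA
      obtain ⟨tb, hTb, htj, hOpb, rfl⟩ := hB
      refine ⟨hij, by simp, (fun x y hx _ => (by cases hx)), ?_⟩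
      intro x y hx hy
      cases hx
      cases hy
      by_cases hc : c = c'
      · subst hc
        have hne : k + 1 ≠ k' + 1 := fun h => h1 (Or.inr (Or.inr (Or.inl (by rw [← h]))))
        exact Or.inr (cvok_sig_sig (k+1) (k'+1) (Nat.succ_pos _) (Nat.succ_pos _) hne)
      · exact Or.inl hc
  · rcases k with _ | k
    · obtain ⟨ta, hTa, hti, hOpa, rfl⟩ := hA
      obtain ⟨tb, hTb, htj, hOpb, rfl⟩ := hB
      refine ⟨hij, by simp, (fun x y hx _ => (by cases hx)), ?_⟩
      intro x y hx hy
      cases hx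
      cases hy
      by_cases hc : c = c'
      · subst hc
        have hW : W' = ∅ := by by_contra hW; exact h1 (Or.inr (Or.inr ⟨W', hW, rfl⟩))
        subst hW
        exact Or.inr cvok_s0_bro0
      · exact Or.inl hc
    · obtain ⟨ta, hTa, hti, hOpa, rfl⟩ := hA
      obtain ⟨tb, hTb, htj, hOpb, rfl⟩ := hB
      refine ⟨hij, by simp, (fun x y hx _ => (by cases hx)), ?_⟩
      intro x y hx hy
      cases hx
      cases hy
      by_cases hc : c = c'
      · subst hc
        exact absurd (Or.inr (Or.inr (Or.inr ⟨W', rfl⟩)) : Dep0 (i, Eff.sig c (k+1)) ((j : ℕ), Eff.bro c W')) h1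
      · exact Or.inl hc
  · obtain ⟨ta, hTa, hti, hOpa, rfl⟩ := hA
    obtain ⟨htj, hTb, hOpb, rfl⟩ := hB
    refine ⟨(by rw [← htj]; exact hij), by simp, (fun x y hx _ => (by cases hx)), ?_⟩
    exact fun x y _ hy => (by cases hy)
  · obtain ⟨ta, hTa, hti, hOpa, rfl⟩ := hA
    obtain ⟨tb, hTb, htj, hOpb, rfl⟩ := hB
    refine ⟨hij, by simp, (fun x y hx _ => (by cases hx)), ?_⟩
    exact fun x y _ hy => (by cases hy)
  · obtain ⟨ta, hTa, hti, hOpa, rfl⟩ := hA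
    obtain ⟨tb, hTb, htj, hOpb, rfl⟩ := hB
    refine ⟨hij, by simp, (fun x y hx _ => (by cases hx)), ?_⟩
    exact fun x y _ hy => (by cases hy)
  · obtain ⟨ta, hTa, hti, hOpa, rfl⟩ := hA
    obtain ⟨tb, hTb, htj, hOpb, rfl⟩ := hB
    refine ⟨hij, by simp, (fun x y hx _ => (by cases hx)), ?_⟩
    intro x y hx hy
    cases hx
    cases hy
    by_cases hc : c = c'
    · subst hc
      refine absurd ?_ h1
      by_cases hW : W = ∅
      · exact Or.inl ⟨hW, Or.inl ⟨l', rfl⟩⟩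
      · exact Or.inr ⟨hW, Or.inl ⟨l', rfl⟩⟩
    · exact Or.inl hc
  · obtain ⟨ta, hTa, hti, hOpa, rfl⟩ := hA
    obtain ⟨tb, hTb, htj, hOpb, rfl⟩ := hB
    refine ⟨hij, by simp, (fun x y hx _ => (by cases hx)), ?_⟩
    intro x y hx hy
    cases hx
    cases hy
    by_cases hc : c = c'
    · subst hc
      have hjW : j ∉ W := fun hm => h1 (Or.inr ⟨Set.Nonempty.ne_empty ⟨j, hm⟩, Or.inr (Or.inl ⟨l', hm, rfl⟩)⟩)
      exact Or.inr (cvok_w2_bro j W hjW).symm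
    · exact Or.inl hc
  · rcases k' with _ | k'
    · obtain ⟨ta, hTa, hti, hOpa, rfl⟩ := hA
      obtain ⟨tb, hTb, htj, hOpb, rfl⟩ := hB
      refine ⟨hij, by simp, (fun x y hx _ => (by cases hx)), ?_⟩
      intro x y hx hy
      cases hx
      cases hy
      by_cases hc : c = c'
      · subst hc
        have hW : W = ∅ := by by_contra hW; exact h1 (Or.inr ⟨hW, Or.inr (Or.inr (Or.inl ⟨0, rfl⟩))⟩)
        subst hW
        exact Or.inr cvok_s0_bro0.symm
      · exact Or.inl hc
    · obtain ⟨ta, hTa, hti, hOpa, rfl⟩ := hA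
      obtain ⟨tb, hTb, htj, hOpb, rfl⟩ := hB
      refine ⟨hij, by simp, (fun x y hx _ => (by cases hx)), ?_⟩
      intro x y hx hy
      cases hx
      cases hy
      by_cases hc : c = c'
      · subst hc
        refine absurd ?_ h1
        by_cases hW : W = ∅
        · exact Or.inl ⟨hW, Or.inr (Or.inl ⟨k'+1, Nat.succ_ne_zero _, rfl⟩)⟩
        · exact Or.inr ⟨hW, Or.inr (Or.inr (Or.inl ⟨k'+1, rfl⟩))⟩
      · exact Or.inl hc
  · obtain ⟨ta, hTa, hti, hOpa, rfl⟩ := hA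
    obtain ⟨tb, hTb, htj, hOpb, rfl⟩ := hB
    refine ⟨hij, by simp, (fun x y hx _ => (by cases hx)), ?_⟩
    intro x y hx hy
    cases hx
    cases hy
    by_cases hc : c = c'
    · subst hc
      have hW : W = ∅ := by by_contra hW; exact h1 (Or.inr ⟨hW, Or.inr (Or.inr (Or.inr ⟨W', rfl⟩))⟩)
      have hW' : W' = ∅ := by subst hW; by_contra hW'; exact h1 (Or.inl ⟨rfl, Or.inr (Or.inr ⟨W', hW', rfl⟩)⟩)
      subst hW; subst hW'
      exact Or.inr cvok_bro0_bro0
    · exact Or.inl hc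

end CompatOfIndep

/-- for a data-race-free program, the independence relation
derived from the paper's dependence table is a valid independence relation:
it is symmetric, irreflexive, and every independent pair of actions commutes
at every reachable state. -/
theorem indep_valid [DecidableEq Lock] [DecidableEq CV]
    (P : Prog L Mem Lock CV) (hdrf : DataRaceFree P) :
    (∀ a b : Act L Mem Lock CV, Indep a b → Indep b a) ∧
    (∀ a : Act L Mem Lock CV, ¬ Indep a a) ∧
    (∀ a b : Act L Mem Lock CV, Indep a b →
      ∀ s, Reachable P s → CommuteAt P a b s) := by
  refine ⟨?_, ?_, ?_⟩
  · intro a b h hd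
    refine h ?_
    rcases hd with h' | h' | h'
    · exact Or.inl h'.symm
    · exact Or.inr (Or.inr h')
    · exact Or.inr (Or.inl h')
  · intro a h
    exact h (Or.inl rfl)
  · intro a b hI s hs
    obtain ⟨i, ea⟩ := a
    obtain ⟨j, eb⟩ := b
    have hij : i ≠ j := fun h => hI (Or.inl h)
    have h1 : ¬ Dep0 (i, ea) (j, eb) := fun h => hI (Or.inr (Or.inl h))
    have h2 : ¬ Dep0 (j, eb) (i, ea) := fun h => hI (Or.inr (Or.inr h))
    by_cases hl : (∃ t, ea = Eff.loc t) ∧ (∃ t, eb = Eff.loc t)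
    · obtain ⟨⟨t, rfl⟩, t', rfl⟩ := hl
      by_cases hwa : i = t.tid ∧ t ∈ P.T
      · by_cases hwb : j = t'.tid ∧ t' ∈ P.T
        · obtain ⟨h, hta⟩ := hwa
          obtain ⟨h', htb⟩ := hwb
          subst h; subst h'
          exact hdrf t t' hta htb hij s hs
        · have hnb : ∀ σ u, ¬ Step P σ (j, Eff.loc t') u := by
            intro σ u h
            rw [step_iff] at h
            obtain ⟨A, ⟨hjt, hT, -, -⟩, -⟩ := h
            exact hwb ⟨hjt, hT⟩
          constructor
          · intro s' _
            constructor
            · rintro ⟨u, hu⟩; exact absurd hu (hnb _ _)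
            · rintro ⟨u, hu⟩; exact absurd hu (hnb _ _)
          · rintro - ⟨u, hu⟩
            exact absurd hu (hnb _ _)
      · have hna : ∀ σ u, ¬ Step P σ (i, Eff.loc t) u := by
          intro σ u h
          rw [step_iff] at h
          obtain ⟨A, ⟨hit, hT, -, -⟩, -⟩ := h
          exact hwa ⟨hit, hT⟩
        constructor
        · intro s' hs'
          exact absurd hs' (hna _ _)
        · rintro ⟨u, hu⟩ -
          exact absurd hu (hna _ _)
    · have hnl : (∀ t, ea ≠ Eff.loc t) ∨ (∀ t, eb ≠ Eff.loc t) := by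
        by_cases h : ∃ t, ea = Eff.loc t
        · exact Or.inr fun t h' => hl ⟨h, t, h'⟩
        · exact Or.inl fun t h' => h ⟨t, h'⟩
      exact commute_of_compat P _ _ (compat_of_indep P hij h1 h2 hnl) s
end
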